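/- arXiv:1809.07699 — 3 statements merged into one kernel-verified Lean document; each statement's English description precedes it below -/
import Mathlib

section
/- Let p be a prime and let G be a finite p-group of maximal class with |G| ≥ p^4. Then p^3 ∈ cod(G). -/
set_option maxHeartbeats 1000000


open CategoryTheory

/-- The degree of a complex representation: the dimension of the underlying vector space. -/
noncomputable def repDegree {G : Type} [Group G] (V : FDRep ℂ G) : ℕ :=
  Module.finrank ℂ V

/-- The kernel of a representation of `G`, as a subgroup of `G`. -/
noncomputable def repKer {G : Type} [Group G] (V : FDRep ℂ G) : Subgroup G :=
  MonoidHom.ker (Representation.asGroupHom V.ρ)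

/-- The codegree of a character: `|G : ker χ| / χ(1)`. -/
noncomputable def codegree {G : Type} [Group G] (V : FDRep ℂ G) : ℕ :=
  (repKer V).index / repDegree V

/-- `cod(G)`: the set of codegrees of the irreducible complex characters of `G`. -/
def codSet (G : Type) [Group G] : Set ℕ :=
  {m | ∃ V : FDRep ℂ G, Simple V ∧ codegree V = m}

/-- `cd(G)`: the set of degrees of the irreducible complex characters of `G`. -/
def cdSet (G : Type) [Group G] : Set ℕ :=
  {m | ∃ V : FDRep ℂ G, Simple V ∧ repDegree V = m}

/-- The nilpotency class of `G`: the least `n` with `upperCentralSeries G n = ⊤`. -/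
noncomputable def nilClass (G : Type) [Group G] : ℕ :=
  sInf {n | upperCentralSeries G n = ⊤}

open scoped Classical in
/-- The character of `G` induced from the linear character `lam` of the subgroup `H`. -/
noncomputable def indLinearChar {G : Type} [Group G] [Fintype G] (H : Subgroup G)
    (lam : H →* ℂˣ) : G → ℂ :=
  fun g => (∑ x : G, if h : x * g * x⁻¹ ∈ H then ((lam ⟨x * g * x⁻¹, h⟩ : ℂˣ) : ℂ) else 0) /
    (Nat.card H : ℂ)

/-- A finite group is normally monomial if every irreducible complex character is induced
from a linear character of a normal subgroup. -/
def NormallyMonomial (G : Type) [Group G] [Fintype G] : Prop :=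
  ∀ V : FDRep ℂ G, Simple V → ∃ (H : Subgroup G) (lam : H →* ℂˣ),
    H.Normal ∧ FDRep.character V = indLinearChar H lam


section Transfer
variable {G : Type} [Group G]

/-- The sub-representation on an invariant submodule, as an `FDRep`. -/
noncomputable def subObj (X : FDRep ℂ G) (S : Submodule ℂ X)
    (hS : ∀ g : G, ∀ v ∈ S, X.ρ g v ∈ S) : FDRep ℂ G :=
  FDRep.of (G := G)
    { toFun := fun g => (X.ρ g).restrict (p := S) (q := S) (fun v hv => hS g v hv)
      map_one' := by
        ext v
        simp [LinearMap.restrict_apply]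
      map_mul' := fun g h => by
        ext v
        simp [LinearMap.restrict_apply] }

/-- The inclusion of an invariant submodule. -/
noncomputable def subObjIncl (X : FDRep ℂ G) (S : Submodule ℂ X)
    (hS : ∀ g : G, ∀ v ∈ S, X.ρ g v ∈ S) : subObj X S hS ⟶ X where
  hom := FGModuleCat.ofHom (S.subtype : ↥S →ₗ[ℂ] ↥X)
  comm := fun g => by
    ext v
    rfl

theorem simple_of_invariant_submodules (X : FDRep ℂ G)
    (hnz : ∃ v : X, v ≠ 0)
    (hsub : ∀ S : Submodule ℂ X, (∀ g : G, ∀ v ∈ S, X.ρ g v ∈ S) → S = ⊥ ∨ S = ⊤) :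
    Simple X := by
  obtain ⟨v₀, hv₀⟩ := hnz
  constructor
  intro Y f hm
  constructor
  · rintro hiso rfl
    have h1 : (inv (0 : Y ⟶ X)) ≫ (0 : Y ⟶ X) = 𝟙 X := IsIso.inv_hom_id _
    have h2 : ((inv (0 : Y ⟶ X)) ≫ (0 : Y ⟶ X)).hom v₀ = (𝟙 X : X ⟶ X).hom v₀ := by rw [h1]
    simp only [Action.comp_hom, Action.zero_hom, Action.id_hom] at h2
    apply hv₀
    exact h2.symm.trans rfl
  · intro hf0
    -- the range of `f.hom` is an invariant submodule
    have hrange : ∀ g : G, ∀ v ∈ LinearMap.range f.hom.hom.hom, X.ρ g v ∈ LinearMap.range f.hom.hom.hom := by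
      rintro g v ⟨w, rfl⟩
      exact ⟨Y.ρ g w, (congrArg (fun φ => φ.hom.hom w) (f.comm g) :)⟩
    have hker : ∀ g : G, ∀ v ∈ LinearMap.ker f.hom.hom.hom, Y.ρ g v ∈ LinearMap.ker f.hom.hom.hom := by
      intro g v hv
      simp only [LinearMap.mem_ker] at hv ⊢
      have h : f.hom.hom.hom (Y.ρ g v) = X.ρ g (f.hom.hom.hom v) := congrArg (fun φ => φ.hom.hom v) (f.comm g)
      exact h.trans (by rw [hv, map_zero])
    -- surjectivity
    have hsurj : Function.Surjective f.hom := by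
      rcases hsub (LinearMap.range f.hom.hom.hom) hrange with h | h
      · exfalso
        apply hf0
        apply Action.hom_ext
        refine FGModuleCat.hom_ext (LinearMap.ext ?_)
        intro w
        have : f.hom w ∈ LinearMap.range f.hom.hom.hom := ⟨w, rfl⟩
        rw [h] at this
        exact this.trans rfl
      · exact LinearMap.range_eq_top.mp h
    -- injectivity
    have hinj : Function.Injective f.hom := by
      have hzero : LinearMap.ker f.hom.hom.hom = ⊥ := by
        by_contra hne
        obtain ⟨w, hwK, hw0⟩ := Submodule.exists_mem_ne_zero_of_ne_bot hne
        have hcomp : subObjIncl Y (LinearMap.ker f.hom.hom.hom) hker ≫ f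
            = (0 : subObj Y (LinearMap.ker f.hom.hom.hom) hker ⟶ Y) ≫ f := by
          apply Action.hom_ext
          refine FGModuleCat.hom_ext (LinearMap.ext ?_)
          rintro ⟨u, hu⟩
          simp only [Action.comp_hom, Action.zero_hom]
          show f.hom ((LinearMap.ker f.hom.hom.hom).subtype ⟨u, hu⟩) = _
          exact (LinearMap.mem_ker.mp hu).trans (by simp; rfl)
        have := (cancel_mono f).mp hcomp
        have h0 : (⟨w, hwK⟩ : LinearMap.ker f.hom.hom.hom) = 0 := by
          have hc := congrArg (fun (φ : subObj Y (LinearMap.ker f.hom.hom.hom) hker ⟶ Y) =>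
            φ.hom ⟨w, hwK⟩) this
          simp only [Action.zero_hom] at hc
          have : (LinearMap.ker f.hom.hom.hom).subtype ⟨w, hwK⟩ = 0 := hc.trans rfl
          exact Subtype.ext (by simpa using this)
        exact hw0 (by simpa using congrArg Subtype.val h0)
      exact LinearMap.ker_eq_bot.mp hzero
    -- build the isomorphism
    haveI := Y.V.property
    haveI := X.V.property
    let e := LinearEquiv.ofBijective (f.hom.hom.hom : ↥Y.V →ₗ[ℂ] ↥X.V) ⟨hinj, hsurj⟩
    haveI : IsIso f.hom := by
      have : IsIso (e.toFGModuleCatIso).hom := inferInstance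
      exact this
    exact Action.isIso_of_hom_isIso f

end Transfer

section Aux

lemma pow_inj_of_orderOf {γ : Type*} [Group γ] {u : γ} {p : ℕ} (h : orderOf u = p)
    {i j : ℕ} (hi : i < p) (hj : j < p) (hij : u ^ i = u ^ j) : i = j := by
  wlog hle : i ≤ j generalizing i j
  · exact (this hj hi hij.symm (by omega)).symm
  have h1 : u ^ (j - i) = 1 := by
    have h2 : u ^ (j - i) = u ^ j * (u ^ i)⁻¹ := pow_sub u hle
    rw [h2, ← hij, mul_inv_cancel]
  have h3 : p ∣ j - i := h ▸ orderOf_dvd_of_pow_eq_one h1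
  have h4 : j - i = 0 := Nat.eq_zero_of_dvd_of_lt h3 (by omega)
  omega

lemma sum_hom_eq_zero {A : Type*} [Group A] [Fintype A] (c : A →* ℂˣ) {a₀ : A}
    (h : c a₀ ≠ 1) : ∑ a : A, ((c a : ℂˣ) : ℂ) = 0 := by
  have h1 : ∑ a : A, ((c (a₀ * a) : ℂˣ) : ℂ) = ∑ a : A, ((c a : ℂˣ) : ℂ) :=
    Fintype.sum_equiv (Equiv.mulLeft a₀) _ _ (fun a => rfl)
  have h2 : ∑ a : A, ((c (a₀ * a) : ℂˣ) : ℂ) = ((c a₀ : ℂˣ) : ℂ) * ∑ a : A, ((c a : ℂˣ) : ℂ) := by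
    rw [Finset.mul_sum]
    refine Finset.sum_congr rfl fun a _ => ?_
    rw [map_mul, Units.val_mul]
  have h3 : ((c a₀ : ℂˣ) : ℂ) ≠ 1 := fun hc => h (Units.val_eq_one.mp hc)
  have h4 : (((c a₀ : ℂˣ) : ℂ) - 1) * (∑ a : A, ((c a : ℂˣ) : ℂ)) = 0 := by
    rw [sub_mul, one_mul, ← h2, h1, sub_self]
  rcases mul_eq_zero.mp h4 with h5 | h5
  · exact absurd (by linear_combination h5 : ((c a₀ : ℂˣ) : ℂ) = 1) h3
  · exact h5

lemma comm_var₁ {G : Type*} [Group G] {N : Subgroup G} [hN : N.Normal] {x : G}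
    (h : ∀ y, x * y * x⁻¹ * y⁻¹ ∈ N) (y : G) : x⁻¹ * y⁻¹ * x * y ∈ N := by
  have h1 : x * y⁻¹ * x⁻¹ * y ∈ N := by simpa using h y⁻¹
  have h2 := hN.conj_mem _ h1 x⁻¹
  have h3 : (x⁻¹ * (x * y⁻¹ * x⁻¹ * y) * x⁻¹⁻¹)⁻¹ = x⁻¹ * y⁻¹ * x * y := by group
  exact h3 ▸ inv_mem h2

lemma comm_var₂ {G : Type*} [Group G] {N : Subgroup G} [hN : N.Normal] {x : G}
    (h : ∀ y, x⁻¹ * y⁻¹ * x * y ∈ N) (y : G) : x * y * x⁻¹ * y⁻¹ ∈ N := by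
  have h1 : x⁻¹ * y * x * y⁻¹ ∈ N := by simpa using h y⁻¹
  have h2 := hN.conj_mem _ h1 x
  have h3 : (x * (x⁻¹ * y * x * y⁻¹) * x⁻¹)⁻¹ = x * y * x⁻¹ * y⁻¹ := by group
  exact h3 ▸ inv_mem h2

lemma card_lt_of_lt {G : Type*} [Group G] [Finite G] {H K : Subgroup G} (h : H < K) :
    Nat.card H < Nat.card K := by
  have hsub : (H : Set G) ⊂ (K : Set G) := by
    rw [Set.ssubset_iff_of_subset (by exact_mod_cast h.le)]
    obtain ⟨z, hzK, hzH⟩ := SetLike.exists_of_lt h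
    exact ⟨z, hzK, hzH⟩
  have := Set.ncard_lt_ncard hsub (K : Set G).toFinite
  rwa [← Nat.card_coe_set_eq, ← Nat.card_coe_set_eq] at this

lemma exists_central_of_normal {p : ℕ} [hpf : Fact p.Prime] {Q : Type*} [Group Q] [Finite Q]
    (hQ : IsPGroup p Q) (K : Subgroup Q) [hKn : K.Normal] (hK : K ≠ ⊥) :
    ∃ z : Q, z ∈ K ∧ z ≠ 1 ∧ z ∈ Subgroup.center Q := by
  letI : MulAction Q K := MulAction.compHom _ (MulAut.conjNormal (H := K))
  have hsmul : ∀ (g : Q) (k : K), ((g • k : K) : Q) = g * k * g⁻¹ := fun g k =>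
    MulAut.conjNormal_apply g k
  have hmod := hQ.card_modEq_card_fixedPoints K
  have hdvdK : p ∣ Nat.card K := by
    obtain ⟨k, hk⟩ := (IsPGroup.iff_card.mp (hQ.to_subgroup K))
    have hk1 : Nat.card K ≠ 1 := by
      intro h1
      exact hK (Subgroup.card_eq_one.mp h1)
    rcases Nat.eq_zero_or_pos k with rfl | hkpos
    · rw [pow_zero] at hk; exact absurd hk hk1
    · exact hk ▸ dvd_pow_self p (by omega)
  have hdvdF : p ∣ Nat.card (MulAction.fixedPoints Q K) := by
    have h0 : Nat.card K ≡ 0 [MOD p] := (Nat.modEq_zero_iff_dvd).mpr hdvdK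
    exact (Nat.modEq_zero_iff_dvd).mp (hmod.symm.trans h0)
  have h1mem : (1 : K) ∈ MulAction.fixedPoints Q K := by
    rw [MulAction.mem_fixedPoints]
    intro g
    ext
    rw [hsmul]
    simp
  have hpos : 0 < Nat.card (MulAction.fixedPoints Q K) := by
    rw [Nat.card_pos_iff]
    exact ⟨⟨⟨1, h1mem⟩⟩, Set.Finite.to_subtype (Set.toFinite _)⟩
  have h2 : 1 < Nat.card (MulAction.fixedPoints Q K) :=
    lt_of_lt_of_le hpf.out.one_lt (Nat.le_of_dvd hpos hdvdF)
  haveI hnt : Nontrivial (MulAction.fixedPoints Q K) := Finite.one_lt_card_iff_nontrivial.mp h2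
  obtain ⟨z, hz⟩ := exists_ne (α := ↥(MulAction.fixedPoints Q K)) ⟨1, h1mem⟩
  have hz1 : (z : K) ≠ 1 := fun h => hz (Subtype.ext h)
  have hzc : ((z : K) : Q) ∈ Subgroup.center Q := by
    rw [Subgroup.mem_center_iff]
    intro g
    have hfix := z.2 g
    have hval : g * ((z : K) : Q) * g⁻¹ = ((z : K) : Q) := by
      rw [← hsmul g (z : K)]
      exact congrArg Subtype.val hfix
    calc g * ((z : K) : Q) = (g * ((z : K) : Q) * g⁻¹) * g := by group
    _ = ((z : K) : Q) * g := by rw [hval]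
  exact ⟨((z : K) : Q), (z : K).2, fun h => hz1 (by exact Subtype.ext h), hzc⟩

end Aux

section IndRep
open scoped Classical

variable {Q : Type} [Group Q] (A : Subgroup Q) (lam : A →* ℂˣ)

/-- Right-translation action on functions. -/
noncomputable def tau (s : Q) : (Q → ℂ) →ₗ[ℂ] (Q → ℂ) where
  toFun F := fun q => F (q * s)
  map_add' F G := rfl
  map_smul' c F := rfl

/-- The space of the representation induced from the character `lam` of `A`. -/
noncomputable def indM : Submodule ℂ (Q → ℂ) where
  carrier := {F | ∀ (a : A) (q : Q), F (↑a * q) = ((lam a : ℂˣ) : ℂ) * F q}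
  add_mem' := by
    intro F G hF hG a q
    simp only [Pi.add_apply, hF a q, hG a q]
    ring
  zero_mem' := by intro a q; simp
  smul_mem' := by
    intro c F hF a q
    simp only [Pi.smul_apply, hF a q, smul_eq_mul]
    ring

lemma tau_mem (s : Q) (F : Q → ℂ) (hF : F ∈ indM A lam) : tau s F ∈ indM A lam := by
  intro a q
  show F ((↑a * q) * s) = _ * F (q * s)
  rw [mul_assoc]
  exact hF a (q * s)

/-- The representation of `Q` induced from the character `lam` of `A`. -/
noncomputable def indRep : Representation ℂ Q ↥(indM A lam) where
  toFun s := (tau s).restrict (p := indM A lam) (q := indM A lam) (fun F hF => tau_mem A lam s F hF)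
  map_one' := by
    refine LinearMap.ext fun F => Subtype.ext (funext fun q => ?_)
    show (F : Q → ℂ) (q * 1) = (F : Q → ℂ) q
    rw [mul_one]
  map_mul' s t := by
    refine LinearMap.ext fun F => Subtype.ext (funext fun q => ?_)
    show (F : Q → ℂ) (q * (s * t)) = (F : Q → ℂ) (q * s * t)
    rw [mul_assoc]

lemma indRep_coe (s : Q) (F : ↥(indM A lam)) (q : Q) :
    ((indRep A lam s F : ↥(indM A lam)) : Q → ℂ) q = (F : Q → ℂ) (q * s) := rfl

variable (g₀ : Q)

/-- The canonical basis vectors of the induced representation. -/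
noncomputable def eFun (j : ℕ) : Q → ℂ := fun q =>
  if h : q * (g₀ ^ j)⁻¹ ∈ A then ((lam ⟨q * (g₀ ^ j)⁻¹, h⟩ : ℂˣ) : ℂ) else 0

lemma eFun_mem (j : ℕ) : eFun A lam g₀ j ∈ indM A lam := by
  intro a q
  show eFun A lam g₀ j (↑a * q) = _
  unfold eFun
  have hc : (↑a * q) * (g₀ ^ j)⁻¹ = ↑a * (q * (g₀ ^ j)⁻¹) := by rw [mul_assoc]
  rw [hc]
  by_cases h : q * (g₀ ^ j)⁻¹ ∈ A
  · rw [dif_pos h, dif_pos (mul_mem a.2 h)]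
    have harg : (⟨↑a * (q * (g₀ ^ j)⁻¹), mul_mem a.2 h⟩ : A) = a * ⟨q * (g₀ ^ j)⁻¹, h⟩ := rfl
    rw [harg, map_mul, Units.val_mul]
  · rw [dif_neg h, dif_neg (fun hmem => h (by simpa using mul_mem (inv_mem a.2) hmem)), mul_zero]

end IndRep

section PartII
open scoped Classical

/-- The commutator-with-`x` homomorphism into the center. -/
noncomputable def commHom {Q : Type} [Group Q] (x : Q)
    (hxc : ∀ y : Q, x⁻¹ * y⁻¹ * x * y ∈ Subgroup.center Q) : Q →* Subgroup.center Q where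
  toFun q := ⟨x⁻¹ * q⁻¹ * x * q, hxc q⟩
  map_one' := by ext; simp
  map_mul' q r := by
    have h2 := Subgroup.mem_center_iff.mp (hxc q)
    ext
    show x⁻¹ * (q * r)⁻¹ * x * (q * r) = (x⁻¹ * q⁻¹ * x * q) * (x⁻¹ * r⁻¹ * x * r)
    have key : x⁻¹ * (q * r)⁻¹ * x * (q * r)
        = (x⁻¹ * r⁻¹ * x * r) * (r⁻¹ * ((x⁻¹ * q⁻¹ * x * q) * r)) := by group
    rw [key]
    have h5 : r⁻¹ * ((x⁻¹ * q⁻¹ * x * q) * r) = x⁻¹ * q⁻¹ * x * q := by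
      rw [← h2 r, ← mul_assoc, inv_mul_cancel, one_mul]
    rw [h5]
    exact h2 _

theorem partII {p : ℕ} (hp : p.Prime) {Q : Type} [Group Q] [Fintype Q]
    (hQ : Nat.card Q = p ^ 4) (hZ : Nat.card (Subgroup.center Q) = p)
    (x : Q) (hx : x ∉ Subgroup.center Q)
    (hxc : ∀ y : Q, x⁻¹ * y⁻¹ * x * y ∈ Subgroup.center Q) :
    ∃ (M : Submodule ℂ (Q → ℂ)) (ρ : Representation ℂ Q ↥M),
      Module.finrank ℂ ↥M = p ∧
      (∀ q : Q, ρ q = 1 → q = 1) ∧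
      (∃ v : ↥M, v ≠ 0) ∧
      (∀ S : Submodule ℂ ↥M, (∀ q : Q, ∀ v ∈ S, ρ q v ∈ S) → S = ⊥ ∨ S = ⊤) := by
  haveI : Fact p.Prime := ⟨hp⟩
  have hpQ : IsPGroup p Q := IsPGroup.of_card hQ
  set Z := Subgroup.center Q with hZdef
  set f : Q →* Z := commHom x hxc with hfdef
  set A : Subgroup Q := f.ker with hAdef
  have hfq : ∀ q : Q, ((f q : Z) : Q) = x⁻¹ * q⁻¹ * x * q := fun q => rfl
  have hxA : x ∈ A := by
    rw [hAdef, MonoidHom.mem_ker]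
    ext
    rw [hfq, OneMemClass.coe_one]
    group
  have hZA : Z ≤ A := by
    intro z hz
    rw [hAdef, MonoidHom.mem_ker]
    ext
    rw [hfq, OneMemClass.coe_one]
    have h1 := Subgroup.mem_center_iff.mp (inv_mem hz) x
    have h2 : x⁻¹ * z⁻¹ * x * z = x⁻¹ * (z⁻¹ * x) * z := by group
    rw [h2, ← h1]
    group
  have hcommA : ∀ a : Q, a ∈ A → x * a = a * x := by
    intro a ha
    rw [hAdef, MonoidHom.mem_ker] at ha
    have h' : x⁻¹ * a⁻¹ * x * a = 1 := by
      rw [← hfq a, ha]; rfl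
    have := congrArg (fun t => a * x * t) h'
    simp only [mul_one] at this
    calc x * a = a * x * (x⁻¹ * a⁻¹ * x * a) := by group
    _ = a * x := this
  -- a noncentral direction g₀
  have hg₀ : ∃ g₀ : Q, f g₀ ≠ 1 := by
    by_contra hall
    push_neg at hall
    exact hx (Subgroup.mem_center_iff.mpr fun g =>
      (hcommA g (by rw [hAdef, MonoidHom.mem_ker]; exact hall g)).symm)
  obtain ⟨g₀, hg₀⟩ := hg₀
  set w : Z := f g₀ with hwdef
  have hword : orderOf w = p := by
    have h1 : orderOf w ∣ p := hZ ▸ orderOf_dvd_natCard w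
    rcases (hp.eq_one_or_self_of_dvd _ h1) with h | h
    · exact absurd (orderOf_eq_one_iff.mp h) hg₀
    · exact h
  have hwp : w ^ p = 1 := by rw [← hword]; exact pow_orderOf_eq_one w
  have hwinj : ∀ i j : ℕ, i < p → j < p → w ^ i = w ^ j → i = j :=
    fun i j hi hj => pow_inj_of_orderOf hword hi hj
  have hwtop : ∀ z : Z, ∃ j < p, z = w ^ j := by
    have htop : Subgroup.zpowers w = (⊤ : Subgroup Z) := by
      apply Subgroup.eq_top_of_card_eq
      rw [Nat.card_zpowers, hword, hZ]
    intro z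
    have hz : z ∈ Subgroup.zpowers w := htop ▸ Subgroup.mem_top z
    obtain ⟨k, hk⟩ := Subgroup.mem_zpowers_iff.mp hz
    have hp0 : (0 : ℤ) < (p : ℤ) := by exact_mod_cast hp.pos
    have hnonneg : 0 ≤ k % (p : ℤ) := Int.emod_nonneg k (by omega)
    have hlt : k % (p : ℤ) < (p : ℤ) := Int.emod_lt_of_pos k hp0
    refine ⟨(k % (p : ℤ)).toNat, by omega, ?_⟩
    rw [← hk]
    have h1 : w ^ (k % (p : ℤ)) = w ^ k := by
      conv_rhs => rw [← Int.emod_add_mul_ediv k (p : ℤ)]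
      rw [zpow_add, zpow_mul]
      have : w ^ ((p : ℤ)) = 1 := by rw [zpow_natCast, hwp]
      rw [this, one_zpow, mul_one]
    rw [← h1, ← zpow_natCast, Int.toNat_of_nonneg hnonneg]
  have hg₀A : g₀ ∉ A := by
    rw [hAdef, MonoidHom.mem_ker]
    exact hg₀
  have hfg₀pow : ∀ j : ℕ, f (g₀ ^ j) = w ^ j := fun j => by rw [map_pow, hwdef]
  have hdec : ∀ q : Q, ∃ j < p, q * (g₀ ^ j)⁻¹ ∈ A := by
    intro q
    obtain ⟨j, hj, hzj⟩ := hwtop (f q)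
    refine ⟨j, hj, ?_⟩
    rw [hAdef, MonoidHom.mem_ker, map_mul, map_inv, hfg₀pow, ← hzj, mul_inv_cancel]
  have huniq : ∀ (q : Q) (i j : ℕ), i < p → j < p →
      q * (g₀ ^ i)⁻¹ ∈ A → q * (g₀ ^ j)⁻¹ ∈ A → i = j := by
    intro q i j hi hj hqi hqj
    rw [hAdef, MonoidHom.mem_ker, map_mul, map_inv, hfg₀pow] at hqi hqj
    have h1 : f q = w ^ i := by
      have := hqi
      rwa [mul_inv_eq_one] at this
    have h2 : f q = w ^ j := by rwa [mul_inv_eq_one] at hqj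
    exact hwinj i j hi hj (h1 ▸ h2)
  have hg₀p : g₀ ^ p ∈ A := by
    rw [hAdef, MonoidHom.mem_ker, hfg₀pow, hwp]
  -- cardinality of A
  have hAcard : Nat.card A = p ^ 3 := by
    have hridx : A.index = Nat.card f.range := Subgroup.index_ker f
    have hrange : Nat.card f.range = p := by
      have h1 : Nat.card f.range ∣ p := hZ ▸ Subgroup.card_subgroup_dvd_card f.range
      rcases hp.eq_one_or_self_of_dvd _ h1 with h | h
      · exfalso
        have := Subgroup.card_eq_one.mp h
        exact hg₀ (by
          have : f g₀ ∈ f.range := ⟨g₀, rfl⟩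
          rw [Subgroup.card_eq_one.mp h] at this
          simpa using this)
      · exact h
    have h2 : Nat.card A * A.index = Nat.card Q := Subgroup.card_mul_index A
    rw [hridx, hrange, hQ] at h2
    have : p ^ 4 = p ^ 3 * p := by ring
    rw [this] at h2
    exact Nat.eq_of_mul_eq_mul_right hp.pos h2
  -- A is abelian
  have hA_ab : ∀ a b : ↥A, a * b = b * a := by
    have hxA_cent : (⟨x, hxA⟩ : A) ∈ Subgroup.center ↥A := by
      rw [Subgroup.mem_center_iff]
      intro a
      ext
      exact (hcommA (↑a) a.2).symm
    have hZA_le : Z.subgroupOf A ≤ Subgroup.center ↥A := by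
      intro z hz
      rw [Subgroup.mem_center_iff]
      intro a
      ext
      exact Subgroup.mem_center_iff.mp (Subgroup.mem_subgroupOf.mp hz) ↑a
    have hZAcard : Nat.card (Z.subgroupOf A) = p :=
      (Nat.card_congr (Subgroup.subgroupOfEquivOfLe hZA).toEquiv).trans hZ
    have hxA_notin : (⟨x, hxA⟩ : A) ∉ Z.subgroupOf A := by
      rw [Subgroup.mem_subgroupOf]
      exact hx
    have hltC : Z.subgroupOf A < Subgroup.center ↥A :=
      lt_of_le_of_ne hZA_le (fun h => hxA_notin (h ▸ hxA_cent))
    have hcardlt : p < Nat.card (Subgroup.center ↥A) := hZAcard ▸ card_lt_of_lt hltC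
    have hcdvd : Nat.card (Subgroup.center ↥A) ∣ p ^ 3 :=
      hAcard ▸ Subgroup.card_subgroup_dvd_card _
    obtain ⟨e, he3, hce⟩ := (Nat.dvd_prime_pow hp).mp hcdvd
    have he2 : 2 ≤ e := by
      by_contra h
      push_neg at h
      have : Nat.card (Subgroup.center ↥A) ≤ p := by
        rw [hce]
        calc p ^ e ≤ p ^ 1 := Nat.pow_le_pow_right hp.pos (by omega)
        _ = p := pow_one p
      omega
    have hidx : (Subgroup.center ↥A).index = p ^ (3 - e) := by
      have h2 : Nat.card (Subgroup.center ↥A) * (Subgroup.center ↥A).index = Nat.card ↥A :=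
        Subgroup.card_mul_index _
      rw [hce, hAcard] at h2
      have hpe : 0 < p ^ e := pow_pos hp.pos e
      have h3 : p ^ 3 = p ^ e * p ^ (3 - e) := by rw [← pow_add]; congr 1; omega
      rw [h3] at h2
      exact Nat.eq_of_mul_eq_mul_left hpe h2
    have hqcard : Nat.card (↥A ⧸ Subgroup.center ↥A) = p ^ (3 - e) :=
      ((Subgroup.index_eq_card _).symm).trans hidx
    haveI hcyc : IsCyclic (↥A ⧸ Subgroup.center ↥A) := by
      rcases (by omega : e = 2 ∨ e = 3) with rfl | rfl
      · exact isCyclic_of_prime_card (p := p) (by rw [hqcard, pow_one])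
      · haveI : Subsingleton (↥A ⧸ Subgroup.center ↥A) := by
          have h1 : Nat.card (↥A ⧸ Subgroup.center ↥A) = 1 := by rw [hqcard]; norm_num
          exact (Nat.card_eq_one_iff_unique.mp h1).1
        infer_instance
    exact fun a b => commutative_of_cyclic_center_quotient (QuotientGroup.mk' _)
      (le_of_eq (QuotientGroup.ker_mk' _)) a b
  set wA : A := ⟨(w : Q), hZA w.2⟩ with hwAdef
  have hwA1 : wA ≠ 1 := by
    intro h
    have h2 : ((w : Q)) = 1 := congrArg Subtype.val h
    exact hg₀ (Subtype.ext h2)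
  have hlamex : ∃ lam : ↥A →* ℂˣ, lam wA ≠ 1 := by
    letI commA : CommGroup ↥A := { (inferInstance : Group ↥A) with mul_comm := hA_ab }
    haveI : NeZero ((Monoid.exponent ↥A : ℕ) : ℂ) :=
      ⟨Nat.cast_ne_zero.mpr Monoid.exponent_ne_zero_of_finite⟩
    exact CommGroup.exists_apply_ne_one_of_hasEnoughRootsOfUnity ↥A ℂ hwA1
  obtain ⟨lam, hlam⟩ := hlamex
  set ζ : ℂˣ := lam wA with hζdef
  have hwQp : ((w : Q)) ^ p = 1 := by
    have := congrArg Subtype.val hwp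
    simpa using this
  have hwAp : wA ^ p = 1 := by
    ext
    simpa [hwAdef] using hwQp
  have hζp : ζ ^ p = 1 := by rw [hζdef, ← map_pow, hwAp, map_one]
  have hζord : orderOf ζ = p := orderOf_eq_prime hζp hlam
  have hζinj : ∀ i j : ℕ, i < p → j < p → ζ ^ i = ζ ^ j → i = j :=
    fun i j hi hj => pow_inj_of_orderOf hζord hi hj
  haveI hAnormal : A.Normal := MonoidHom.normal_ker f
  have hconjmem : ∀ (s : Q) (a : A), s * ↑a * s⁻¹ ∈ A := fun s a => hAnormal.conj_mem _ a.2 s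
  set chi : ℕ → (↥A →* ℂˣ) := fun i => lam.comp ((MulAut.conjNormal (g₀ ^ i)).toMonoidHom)
    with hchidef
  have hchi_eq : ∀ (i : ℕ) (a : A) (h : g₀ ^ i * ↑a * (g₀ ^ i)⁻¹ ∈ A),
      chi i a = lam ⟨g₀ ^ i * ↑a * (g₀ ^ i)⁻¹, h⟩ := by
    intro i a h
    exact congrArg lam (Subtype.ext (MulAut.conjNormal_apply _ _))
  have hxfq : ∀ q : Q, q⁻¹ * x * q = x * ((f q : Z) : Q) := by
    intro q
    rw [hfq]
    group
  have hchix : ∀ i : ℕ, chi i ⟨x, hxA⟩ = lam ⟨x, hxA⟩ * (ζ ^ i)⁻¹ := by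
    intro i
    have hcoord : g₀ ^ i * x * (g₀ ^ i)⁻¹ = x * (((w ^ i : Z) : Q))⁻¹ := by
      have h1 := hxfq ((g₀ ^ i)⁻¹)
      simp only [inv_inv] at h1
      rw [h1, map_inv, hfg₀pow]
      rfl
    rw [hchi_eq i ⟨x, hxA⟩ (hconjmem (g₀ ^ i) ⟨x, hxA⟩)]
    have harg : (⟨g₀ ^ i * x * (g₀ ^ i)⁻¹, hconjmem (g₀ ^ i) ⟨x, hxA⟩⟩ : A) = ⟨x, hxA⟩ * (wA ^ i)⁻¹ := by
      ext
      show g₀ ^ i * x * (g₀ ^ i)⁻¹ = ((⟨x, hxA⟩ * (wA ^ i)⁻¹ : A) : Q)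
      rw [hcoord]
      simp [hwAdef]
    rw [harg, map_mul, map_inv, map_pow]
  have hchidist : ∀ i j : ℕ, i < p → j < p → i ≠ j → chi i ⟨x, hxA⟩ ≠ chi j ⟨x, hxA⟩ := by
    intro i j hi hj hij heq
    rw [hchix i, hchix j] at heq
    exact hij (hζinj i j hi hj (inv_injective (mul_left_cancel heq)))
  haveI : Fintype ↥A := Fintype.ofFinite _
  have horth : ∀ i j : ℕ, i < p → j < p → i ≠ j →
      ∑ a : ↥A, (((chi i a)⁻¹ * chi j a : ℂˣ) : ℂ) = 0 := by
    intro i j hi hj hij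
    have h := sum_hom_eq_zero ((chi i)⁻¹ * chi j) (a₀ := (⟨x, hxA⟩ : A)) ?_
    · simpa using h
    · intro hone
      apply hchidist i j hi hj hij
      rwa [MonoidHom.mul_apply, MonoidHom.inv_apply, inv_mul_eq_one] at hone
  -- the induced module
  set M : Submodule ℂ (Q → ℂ) := indM A lam with hMdef
  set ρ : Representation ℂ Q ↥M := indRep A lam with hρdef
  have hMcoe : ∀ (F : ↥M) (a : A) (q : Q),
      (F : Q → ℂ) (↑a * q) = ((lam a : ℂˣ) : ℂ) * (F : Q → ℂ) q := fun F => F.2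
  have hρcoe : ∀ (s : Q) (F : ↥M) (q : Q),
      ((ρ s F : ↥M) : Q → ℂ) q = (F : Q → ℂ) (q * s) := fun s F q => rfl
  set eM : ℕ → ↥M := fun j => ⟨eFun A lam g₀ j, eFun_mem A lam g₀ j⟩ with heMdef
  have heval_self : ∀ i : ℕ, ((eM i : ↥M) : Q → ℂ) (g₀ ^ i) = 1 := by
    intro i
    show eFun A lam g₀ i (g₀ ^ i) = 1
    unfold eFun
    have h' : g₀ ^ i * (g₀ ^ i)⁻¹ ∈ A := by rw [mul_inv_cancel]; exact one_mem A
    rw [dif_pos h']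
    have harg : (⟨g₀ ^ i * (g₀ ^ i)⁻¹, h'⟩ : A) = 1 := by ext; simp
    rw [harg, map_one, Units.val_one]
  have heval : ∀ i j : ℕ, i < p → j < p →
      ((eM j : ↥M) : Q → ℂ) (g₀ ^ i) = if i = j then 1 else 0 := by
    intro i j hi hj
    by_cases h : i = j
    · subst h
      rw [if_pos rfl]
      exact heval_self i
    · rw [if_neg h]
      show eFun A lam g₀ j (g₀ ^ i) = 0
      unfold eFun
      rw [dif_neg]
      intro hmem
      exact h (huniq (g₀ ^ i) i j hi hj (by rw [mul_inv_cancel]; exact one_mem A) hmem)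
  have hcoords : ∀ F : ↥M, (∀ j : ℕ, j < p → (F : Q → ℂ) (g₀ ^ j) = 0) → F = 0 := by
    intro F hF
    apply Subtype.ext
    funext q
    obtain ⟨j, hj, ha⟩ := hdec q
    show (F : Q → ℂ) q = 0
    have hq : q = (↑(⟨q * (g₀ ^ j)⁻¹, ha⟩ : A)) * g₀ ^ j := by
      show q = q * (g₀ ^ j)⁻¹ * g₀ ^ j
      rw [inv_mul_cancel_right]
    calc (F : Q → ℂ) q = (F : Q → ℂ) ((↑(⟨q * (g₀ ^ j)⁻¹, ha⟩ : A)) * g₀ ^ j) :=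
          congrArg (F : Q → ℂ) hq
    _ = ((lam ⟨q * (g₀ ^ j)⁻¹, ha⟩ : ℂˣ) : ℂ) * (F : Q → ℂ) (g₀ ^ j) := hMcoe F _ _
    _ = 0 := by rw [hF j hj, mul_zero]
  have hext : ∀ F G' : ↥M,
      (∀ j : ℕ, j < p → (F : Q → ℂ) (g₀ ^ j) = (G' : Q → ℂ) (g₀ ^ j)) → F = G' := by
    intro F G' h
    have h2 : F - G' = 0 := by
      apply hcoords
      intro j hj
      show ((F - G' : ↥M) : Q → ℂ) (g₀ ^ j) = 0
      have h3 : ((F - G' : ↥M) : Q → ℂ) = (F : Q → ℂ) - (G' : Q → ℂ) := rfl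
      rw [h3]
      simp [h j hj]
    exact sub_eq_zero.mp h2
  have heig : ∀ (a : A) (i : ℕ) (F : ↥M),
      ((ρ ↑a F : ↥M) : Q → ℂ) (g₀ ^ i) = ((chi i a : ℂˣ) : ℂ) * (F : Q → ℂ) (g₀ ^ i) := by
    intro a i F
    rw [hρcoe]
    have hsplit : g₀ ^ i * ↑a = (↑(⟨g₀ ^ i * ↑a * (g₀ ^ i)⁻¹, hconjmem (g₀ ^ i) a⟩ : A)) * g₀ ^ i := by
      show g₀ ^ i * ↑a = g₀ ^ i * ↑a * (g₀ ^ i)⁻¹ * g₀ ^ i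
      rw [inv_mul_cancel_right]
    rw [hsplit, hMcoe F _ _, ← hchi_eq i a (hconjmem (g₀ ^ i) a)]
  -- faithfulness
  have hfaith : ∀ s : Q, ρ s = 1 → s = 1 := by
    intro q hq1
    by_contra hqne
    have happ : ∀ F : ↥M, ρ q F = F := fun F => by rw [hq1]; rfl
    have hqA : q ∈ A := by
      have h4 : ((ρ q (eM 0) : ↥M) : Q → ℂ) 1 = ((eM 0 : ↥M) : Q → ℂ) (1 * q) := hρcoe q (eM 0) 1
      rw [happ (eM 0), one_mul] at h4
      have h5 : ((eM 0 : ↥M) : Q → ℂ) 1 = 1 := by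
        have := heval_self 0
        rwa [pow_zero] at this
      have h2 : ((eM 0 : ↥M) : Q → ℂ) q = 1 := by rw [← h4, h5]
      by_contra hqA
      have h6 : ((eM 0 : ↥M) : Q → ℂ) q = 0 := by
        show eFun A lam g₀ 0 q = 0
        unfold eFun
        rw [dif_neg]
        intro hmem
        apply hqA
        simpa using hmem
      rw [h6] at h2
      exact zero_ne_one h2
    have hchiq : ∀ i : ℕ, chi i ⟨q, hqA⟩ = 1 := by
      intro i
      have h1 := heig ⟨q, hqA⟩ i (eM i)
      have h2 : ((⟨q, hqA⟩ : A) : Q) = q := rfl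
      rw [h2, happ (eM i), heval_self i, mul_one] at h1
      exact Units.val_eq_one.mp h1.symm
    set KQ : Subgroup Q := (⨅ i : ℕ, (chi i).ker).map A.subtype with hKQdef
    have hKQmem : ∀ u : Q, u ∈ KQ ↔ ∃ h : u ∈ A, ∀ i : ℕ, chi i ⟨u, h⟩ = 1 := by
      intro u
      rw [hKQdef]
      constructor
      · rintro ⟨y, hy, rfl⟩
        refine ⟨y.2, fun i => ?_⟩
        exact MonoidHom.mem_ker.mp (Subgroup.mem_iInf.mp hy i)
      · rintro ⟨hu, hchiu⟩
        exact ⟨⟨u, hu⟩, Subgroup.mem_iInf.mpr (fun i => MonoidHom.mem_ker.mpr (hchiu i)), rfl⟩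
    haveI hKQnormal : KQ.Normal := by
      constructor
      intro u hu s
      obtain ⟨huA, hchiu⟩ := (hKQmem u).mp hu
      obtain ⟨j, hj, haj⟩ := hdec s
      have hsA : s * u * s⁻¹ ∈ A := hAnormal.conj_mem u huA s
      refine (hKQmem _).mpr ⟨hsA, fun i => ?_⟩
      rw [hchi_eq i ⟨s * u * s⁻¹, hsA⟩ (hconjmem (g₀ ^ i) ⟨s * u * s⁻¹, hsA⟩)]
      set b : A := ⟨g₀ ^ i * (s * (g₀ ^ j)⁻¹) * (g₀ ^ i)⁻¹, hconjmem (g₀ ^ i) ⟨s * (g₀ ^ j)⁻¹, haj⟩⟩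
        with hbdef
      set cu : A := ⟨g₀ ^ (i + j) * u * (g₀ ^ (i + j))⁻¹, hconjmem (g₀ ^ (i + j)) ⟨u, huA⟩⟩
        with hcudef
      have hargA : (⟨g₀ ^ i * (s * u * s⁻¹) * (g₀ ^ i)⁻¹,
          hconjmem (g₀ ^ i) ⟨s * u * s⁻¹, hsA⟩⟩ : A) = b * cu * b⁻¹ := by
        ext
        show g₀ ^ i * (s * u * s⁻¹) * (g₀ ^ i)⁻¹ = ((b * cu * b⁻¹ : A) : Q)
        have hco : ((b * cu * b⁻¹ : A) : Q) = ↑b * ↑cu * (↑b)⁻¹ := rfl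
        rw [hco, hbdef, hcudef]
        show g₀ ^ i * (s * u * s⁻¹) * (g₀ ^ i)⁻¹
            = (g₀ ^ i * (s * (g₀ ^ j)⁻¹) * (g₀ ^ i)⁻¹) * (g₀ ^ (i + j) * u * (g₀ ^ (i + j))⁻¹)
              * (g₀ ^ i * (s * (g₀ ^ j)⁻¹) * (g₀ ^ i)⁻¹)⁻¹
        rw [pow_add]
        group
      rw [hargA, map_mul, map_mul, map_inv]
      have hcu1 : lam cu = 1 := by
        have h3 := hchiu (i + j)
        rw [hchi_eq (i + j) ⟨u, huA⟩ (hconjmem (g₀ ^ (i + j)) ⟨u, huA⟩)] at h3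
        exact h3
      rw [hcu1, mul_one, mul_inv_cancel]
    have hKQne : KQ ≠ ⊥ := by
      intro hbot
      apply hqne
      have hqKQ : q ∈ KQ := (hKQmem q).mpr ⟨hqA, hchiq⟩
      rwa [hbot, Subgroup.mem_bot] at hqKQ
    obtain ⟨z, hzK, hz1, hzc⟩ := exists_central_of_normal hpQ KQ hKQne
    obtain ⟨hzA, hchiz⟩ := (hKQmem z).mp hzK
    have hlamz : lam ⟨z, hzA⟩ = 1 := by
      have h3 := hchiz 0
      rw [hchi_eq 0 ⟨z, hzA⟩ (hconjmem (g₀ ^ 0) ⟨z, hzA⟩)] at h3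
      rw [← h3]
      congr 1
      ext
      show z = g₀ ^ 0 * z * (g₀ ^ 0)⁻¹
      simp
    obtain ⟨j, hjp, hjz⟩ := hwtop ⟨z, hzc⟩
    have hj0 : j ≠ 0 := by
      intro h0
      subst h0
      apply hz1
      have := congrArg Subtype.val hjz
      simpa using this
    have hzwA : (⟨z, hzA⟩ : A) = wA ^ j := by
      ext
      have := congrArg Subtype.val hjz
      simpa [hwAdef] using this
    have hζj : ζ ^ j = 1 := by
      rw [hζdef, ← map_pow, ← hzwA, hlamz]
    have hdvd : p ∣ j := by rw [← hζord]; exact orderOf_dvd_of_pow_eq_one hζj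
    exact absurd (Nat.le_of_dvd (Nat.pos_of_ne_zero hj0) hdvd) (by omega)
  -- irreducibility (invariant submodules)
  have hdich : ∀ S : Submodule ℂ ↥M, (∀ s : Q, ∀ v ∈ S, ρ s v ∈ S) → S = ⊥ ∨ S = ⊤ := by
    intro S hinv
    by_cases hbot : S = ⊥
    · exact Or.inl hbot
    right
    obtain ⟨F, hFS, hF0⟩ := Submodule.exists_mem_ne_zero_of_ne_bot hbot
    have hFc : ∃ i, i < p ∧ (F : Q → ℂ) (g₀ ^ i) ≠ 0 := by
      by_contra h
      push_neg at h
      exact hF0 (hcoords F (fun j hj => h j hj))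
    obtain ⟨i, hip, hFi⟩ := hFc
    set T : ↥M := ∑ a : ↥A, (((chi i a : ℂˣ) : ℂ))⁻¹ • (ρ ↑a F) with hTdef
    have hTS : T ∈ S := Submodule.sum_mem _ (fun a _ => Submodule.smul_mem _ _ (hinv ↑a F hFS))
    have hTcoe : ∀ q : Q, (T : Q → ℂ) q
        = ∑ a : ↥A, (((chi i a : ℂˣ) : ℂ))⁻¹ * ((ρ ↑a F : ↥M) : Q → ℂ) q := by
      intro q
      rw [hTdef]
      simp only [AddSubmonoidClass.coe_finset_sum, SetLike.val_smul, Finset.sum_apply,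
        Pi.smul_apply, smul_eq_mul]
    have hTcoord : ∀ j : ℕ, j < p → (T : Q → ℂ) (g₀ ^ j)
        = if j = i then (Fintype.card ↥A : ℂ) * (F : Q → ℂ) (g₀ ^ i) else 0 := by
      intro j hj
      rw [hTcoe]
      by_cases hji : j = i
      · subst hji
        rw [if_pos rfl]
        have hterm : ∀ a : ↥A, (((chi j a : ℂˣ) : ℂ))⁻¹ * ((ρ ↑a F : ↥M) : Q → ℂ) (g₀ ^ j)
            = (F : Q → ℂ) (g₀ ^ j) := by
          intro a
          rw [heig a j F, ← mul_assoc, inv_mul_cancel₀ (Units.ne_zero _), one_mul]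
        rw [Finset.sum_congr rfl (fun a _ => hterm a), Finset.sum_const, Finset.card_univ]
        simp [nsmul_eq_mul]
      · rw [if_neg hji]
        have hterm : ∀ a : ↥A, (((chi i a : ℂˣ) : ℂ))⁻¹ * ((ρ ↑a F : ↥M) : Q → ℂ) (g₀ ^ j)
            = (((chi i a)⁻¹ * chi j a : ℂˣ) : ℂ) * (F : Q → ℂ) (g₀ ^ j) := by
          intro a
          rw [heig a j F, Units.val_mul, mul_assoc]
          congr 1
          exact (Units.val_inv_eq_inv_val _).symm
        rw [Finset.sum_congr rfl (fun a _ => hterm a), ← Finset.sum_mul,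
          horth i j hip hj (fun h => hji h.symm), zero_mul]
    have hTeq : T = ((Fintype.card ↥A : ℂ) * (F : Q → ℂ) (g₀ ^ i)) • eM i := by
      apply hext
      intro j hj
      rw [hTcoord j hj]
      have hco : ((((Fintype.card ↥A : ℂ) * (F : Q → ℂ) (g₀ ^ i)) • eM i : ↥M) : Q → ℂ) (g₀ ^ j)
          = ((Fintype.card ↥A : ℂ) * (F : Q → ℂ) (g₀ ^ i)) * ((eM i : ↥M) : Q → ℂ) (g₀ ^ j) := rfl
      rw [hco, heval j i hj hip]
      by_cases hji : j = i
      · rw [if_pos hji, if_pos hji, mul_one]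
      · rw [if_neg hji, if_neg hji, mul_zero]
    have hcA0 : (Fintype.card ↥A : ℂ) ≠ 0 := Nat.cast_ne_zero.mpr Fintype.card_ne_zero
    have heMiS : eM i ∈ S := by
      have h1 : eM i = ((Fintype.card ↥A : ℂ) * (F : Q → ℂ) (g₀ ^ i))⁻¹ • T := by
        rw [hTeq, smul_smul, inv_mul_cancel₀ (mul_ne_zero hcA0 hFi), one_smul]
      rw [h1]
      exact Submodule.smul_mem _ _ hTS
    have hstep : ∀ j : ℕ, ρ g₀ (eM (j + 1)) = eM j := by
      intro j
      apply Subtype.ext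
      funext q
      show eFun A lam g₀ (j + 1) (q * g₀) = eFun A lam g₀ j q
      unfold eFun
      have harr : q * g₀ * (g₀ ^ (j + 1))⁻¹ = q * (g₀ ^ j)⁻¹ := by
        rw [pow_succ]
        group
      simp only [harr]
      by_cases hmem : q * (g₀ ^ j)⁻¹ ∈ A
      · rw [dif_pos hmem, dif_pos hmem]
      · rw [dif_neg hmem, dif_neg hmem]
    have hwrap : ρ g₀ (eM 0) = ((lam ⟨g₀ ^ p, hg₀p⟩ : ℂˣ) : ℂ) • eM (p - 1) := by
      apply Subtype.ext
      funext q
      show eFun A lam g₀ 0 (q * g₀)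
          = (((lam ⟨g₀ ^ p, hg₀p⟩ : ℂˣ) : ℂ) • eFun A lam g₀ (p - 1)) q
      have hqq : q * (g₀ ^ (p - 1))⁻¹ = (q * g₀) * (g₀ ^ p)⁻¹ := by
        have hp1 : p - 1 + 1 = p := Nat.succ_pred_eq_of_pos hp.pos
        conv_rhs => rw [← hp1, pow_succ, mul_inv_rev, ← mul_assoc, mul_inv_cancel_right]
      unfold eFun
      simp only [pow_zero, inv_one, mul_one, hqq, Pi.smul_apply, smul_eq_mul]
      by_cases h : q * g₀ ∈ A
      · have h2 : (q * g₀) * (g₀ ^ p)⁻¹ ∈ A := mul_mem h (inv_mem hg₀p)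
        rw [dif_pos h, dif_pos h2]
        have harg : (⟨q * g₀, h⟩ : A) = ⟨(q * g₀) * (g₀ ^ p)⁻¹, h2⟩ * ⟨g₀ ^ p, hg₀p⟩ := by
          ext
          show q * g₀ = (q * g₀) * (g₀ ^ p)⁻¹ * g₀ ^ p
          rw [inv_mul_cancel_right]
        rw [harg, map_mul, Units.val_mul, mul_comm]
      · have h2 : ¬ ((q * g₀) * (g₀ ^ p)⁻¹ ∈ A) := fun hmem => h (by simpa using mul_mem hmem hg₀p)
        rw [dif_neg h, dif_neg h2, mul_zero]
    have hdown : ∀ (k j : ℕ), eM (j + k) ∈ S → eM j ∈ S := by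
      intro k
      induction k with
      | zero => intro j h; simpa using h
      | succ k ih =>
        intro j h
        apply ih
        have h2 := hinv g₀ _ h
        rw [show j + (k + 1) = (j + k) + 1 from rfl, hstep (j + k)] at h2
        exact h2
    have he0 : eM 0 ∈ S := hdown i 0 (by simpa using heMiS)
    have hep1 : eM (p - 1) ∈ S := by
      have h2 := hinv g₀ _ he0
      rw [hwrap] at h2
      have h3 := Submodule.smul_mem S (((lam ⟨g₀ ^ p, hg₀p⟩ : ℂˣ) : ℂ))⁻¹ h2
      rwa [smul_smul, inv_mul_cancel₀ (Units.ne_zero _), one_smul] at h3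
    have hall : ∀ j : ℕ, j < p → eM j ∈ S := by
      intro j hj
      apply hdown (p - 1 - j) j
      rw [show j + (p - 1 - j) = p - 1 by omega]
      exact hep1
    rw [Submodule.eq_top_iff']
    intro u
    have hu : u = ∑ j ∈ Finset.range p, ((u : Q → ℂ) (g₀ ^ j)) • eM j := by
      apply hext
      intro j hj
      have hc : ((∑ j' ∈ Finset.range p, ((u : Q → ℂ) (g₀ ^ j')) • eM j' : ↥M) : Q → ℂ) (g₀ ^ j)
          = ∑ j' ∈ Finset.range p, ((u : Q → ℂ) (g₀ ^ j')) * ((eM j' : ↥M) : Q → ℂ) (g₀ ^ j) := by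
        simp only [AddSubmonoidClass.coe_finset_sum, SetLike.val_smul, Finset.sum_apply,
          Pi.smul_apply, smul_eq_mul]
      rw [hc, Finset.sum_congr rfl (fun j' hj' => by
        rw [heval j j' hj (Finset.mem_range.mp hj')])]
      simp [Finset.mem_range.mpr hj, mul_ite]
    rw [hu]
    exact Submodule.sum_mem _ (fun j hj => Submodule.smul_mem _ _ (hall j (Finset.mem_range.mp hj)))
  -- dimension
  have hfin : Module.finrank ℂ ↥M = p := by
    let L : ↥M →ₗ[ℂ] (Fin p → ℂ) :=
      { toFun := fun u => fun j => (u : Q → ℂ) (g₀ ^ (j : ℕ))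
        map_add' := fun u v => rfl
        map_smul' := fun c u => rfl }
    have hLinj : Function.Injective L := by
      intro u v huv
      apply hext
      intro j hj
      exact congrFun huv ⟨j, hj⟩
    have hLsurj : Function.Surjective L := by
      intro c
      refine ⟨∑ j' : Fin p, c j' • eM (j' : ℕ), ?_⟩
      funext j
      show ((∑ j' : Fin p, c j' • eM (j' : ℕ) : ↥M) : Q → ℂ) (g₀ ^ (j : ℕ)) = c j
      have hc : ((∑ j' : Fin p, c j' • eM (j' : ℕ) : ↥M) : Q → ℂ) (g₀ ^ (j : ℕ))
          = ∑ j' : Fin p, c j' * ((eM (j' : ℕ) : ↥M) : Q → ℂ) (g₀ ^ (j : ℕ)) := by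
        simp only [AddSubmonoidClass.coe_finset_sum, SetLike.val_smul, Finset.sum_apply,
          Pi.smul_apply, smul_eq_mul]
      rw [hc, Fintype.sum_congr _ _ (fun j' => by
        rw [heval (j : ℕ) (j' : ℕ) j.2 j'.2])]
      simp [Fin.val_eq_val, mul_ite]
    have hLeq := LinearEquiv.finrank_eq (LinearEquiv.ofBijective L ⟨hLinj, hLsurj⟩)
    rw [hLeq]
    simp [Module.finrank_fintype_fun_eq_card]
  have hnz : ∃ v : ↥M, v ≠ 0 := by
    refine ⟨eM 0, fun h => ?_⟩
    have h1 := heval_self 0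
    rw [h] at h1
    exact zero_ne_one (h1 : ((0 : ↥M) : Q → ℂ) (g₀ ^ 0) = 1)
  exact ⟨M, ρ, hfin, hfaith, hnz, hdich⟩



end PartII

section PartI

theorem partI {p n : ℕ} (hp : p.Prime) {G : Type} [Group G] [Fintype G]
    (hcard : Fintype.card G = p ^ n) (hn : 4 ≤ n)
    (hmax : sInf {k | Subgroup.upperCentralSeries G k = ⊤} = n - 1) :
    Nat.card (G ⧸ Subgroup.upperCentralSeries G (n - 4)) = p ^ 4 ∧
      Nat.card (Subgroup.center (G ⧸ Subgroup.upperCentralSeries G (n - 4))) = p ∧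
      ∃ x : G ⧸ Subgroup.upperCentralSeries G (n - 4),
        x ∉ Subgroup.center (G ⧸ Subgroup.upperCentralSeries G (n - 4)) ∧
        ∀ q : G ⧸ Subgroup.upperCentralSeries G (n - 4),
          x⁻¹ * q⁻¹ * x * q ∈ Subgroup.center (G ⧸ Subgroup.upperCentralSeries G (n - 4)) := by
  obtain ⟨m, rfl⟩ : ∃ m, n = m + 4 := ⟨n - 4, by omega⟩
  rw [show m + 4 - 4 = m from rfl]
  haveI : Fact p.Prime := ⟨hp⟩
  have hcard' : Nat.card G = p ^ (m + 4) := by rw [Nat.card_eq_fintype_card, hcard]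
  have hpg : IsPGroup p G := IsPGroup.of_card hcard'
  haveI hnil : Group.IsNilpotent G := hpg.isNilpotent
  have hSne : {k | Subgroup.upperCentralSeries G k = ⊤}.Nonempty := hnil.nilpotent
  have hsInf : sInf {k | Subgroup.upperCentralSeries G k = ⊤} = m + 3 := by omega
  have htop : Subgroup.upperCentralSeries G (m + 3) = ⊤ := by
    have := Nat.sInf_mem hSne
    rwa [hsInf] at this
  have hne : ∀ k, k < m + 3 → Subgroup.upperCentralSeries G k ≠ ⊤ := by
    intro k hk h
    have := Nat.sInf_le (show k ∈ {k | Subgroup.upperCentralSeries G k = ⊤} from h)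
    rw [hsInf] at this
    omega
  have hfix : ∀ i, Subgroup.upperCentralSeries G i = Subgroup.upperCentralSeries G (i + 1) →
      ∀ k, Subgroup.upperCentralSeries G (i + k) = Subgroup.upperCentralSeries G i := by
    intro i hi k
    induction k with
    | zero => rfl
    | succ k ih =>
      have h1 : ∀ y : G, y ∈ Subgroup.upperCentralSeries G ((i + k) + 1) ↔
          ∀ z : G, y * z * y⁻¹ * z⁻¹ ∈ Subgroup.upperCentralSeries G (i + k) :=
        fun y => mem_upperCentralSeries_succ_iff
      have h2 : ∀ y : G, y ∈ Subgroup.upperCentralSeries G (i + 1) ↔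
          ∀ z : G, y * z * y⁻¹ * z⁻¹ ∈ Subgroup.upperCentralSeries G i :=
        fun y => mem_upperCentralSeries_succ_iff
      ext y
      rw [show i + (k + 1) = (i + k) + 1 from rfl, h1 y, ih]
      conv_rhs => rw [hi]
      exact Iff.symm (h2 y)
  have hlt : ∀ i, i < m + 3 → Subgroup.upperCentralSeries G i < Subgroup.upperCentralSeries G (i + 1) := by
    intro i hi
    rcases lt_or_eq_of_le (upperCentralSeries_mono G (Nat.le_succ i)) with h | h
    · exact h
    · exfalso
      have h4 := hfix i h (m + 3 - i)
      rw [show i + (m + 3 - i) = m + 3 by omega] at h4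
      exact hne i hi (h4.symm.trans htop)
  have hFpow : ∀ i, ∃ e ≤ m + 4, Nat.card (Subgroup.upperCentralSeries G i) = p ^ e := by
    intro i
    have := Subgroup.card_subgroup_dvd_card (Subgroup.upperCentralSeries G i)
    rw [hcard'] at this
    obtain ⟨e, he, hee⟩ := (Nat.dvd_prime_pow hp).mp this
    exact ⟨e, he, hee⟩
  have hFlt : ∀ i, i < m + 3 →
      Nat.card (Subgroup.upperCentralSeries G i) < Nat.card (Subgroup.upperCentralSeries G (i + 1)) :=
    fun i hi => card_lt_of_lt (hlt i hi)
  have hF0 : Nat.card (Subgroup.upperCentralSeries G 0) = 1 := by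
    rw [upperCentralSeries_zero]
    exact Subgroup.card_bot
  have hFtop : Nat.card (Subgroup.upperCentralSeries G (m + 3)) = p ^ (m + 4) := by
    rw [htop, ← hcard']
    exact Subgroup.card_top
  have hFlower : ∀ i, i ≤ m + 3 → p ^ i ≤ Nat.card (Subgroup.upperCentralSeries G i) := by
    intro i
    induction i with
    | zero => intro _; rw [hF0, pow_zero]
    | succ i ih =>
      intro hi
      have h1 := ih (by omega)
      have h2 := hFlt i (by omega)
      obtain ⟨e, he, hee⟩ := hFpow (i + 1)
      rw [hee]
      rw [hee] at h2
      have h3 : p ^ i < p ^ e := lt_of_le_of_lt h1 h2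
      have h4 : i < e := (Nat.pow_lt_pow_iff_right hp.one_lt).mp h3
      exact Nat.pow_le_pow_right hp.pos h4
  -- exclude index p at the top
  have hnotp : Nat.card (Subgroup.upperCentralSeries G (m + 2)) ≠ p ^ (m + 3) := by
    intro hF
    have hidx : (Subgroup.upperCentralSeries G (m + 2)).index = p := by
      have h := Subgroup.card_mul_index (Subgroup.upperCentralSeries G (m + 2))
      rw [hF, hcard'] at h
      have h2 : p ^ (m + 4) = p ^ (m + 3) * p := by ring
      rw [h2] at h
      exact Nat.eq_of_mul_eq_mul_left (pow_pos hp.pos _) h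
    haveI : IsCyclic (G ⧸ Subgroup.upperCentralSeries G (m + 2)) := by
      apply isCyclic_of_prime_card (p := p)
      rw [← Subgroup.index_eq_card]
      exact hidx
    have hle : Subgroup.upperCentralSeries G (m + 1) ≤ Subgroup.upperCentralSeries G (m + 2) :=
      upperCentralSeries_mono G (Nat.le_succ _)
    set φ : (G ⧸ Subgroup.upperCentralSeries G (m + 1)) →* (G ⧸ Subgroup.upperCentralSeries G (m + 2)) :=
      QuotientGroup.map _ _ (MonoidHom.id G) hle with hφdef
    have hker : φ.ker ≤ Subgroup.center (G ⧸ Subgroup.upperCentralSeries G (m + 1)) := by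
      intro h hh
      obtain ⟨y, rfl⟩ := QuotientGroup.mk'_surjective _ h
      rw [MonoidHom.mem_ker, hφdef] at hh
      have hy : y ∈ Subgroup.upperCentralSeries G (m + 2) := by
        change (QuotientGroup.mk' (Subgroup.upperCentralSeries G (m + 2)) y) = 1 at hh
        exact (QuotientGroup.eq_one_iff _).mp hh
      have hyc : ∀ u : G, y * u * y⁻¹ * u⁻¹ ∈ Subgroup.upperCentralSeries G (m + 1) :=
        mem_upperCentralSeries_succ_iff.mp hy
      rw [Subgroup.mem_center_iff]
      intro q
      obtain ⟨z, rfl⟩ := QuotientGroup.mk'_surjective _ q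
      show QuotientGroup.mk' _ z * QuotientGroup.mk' _ y
          = QuotientGroup.mk' _ y * QuotientGroup.mk' _ z
      rw [← map_mul, ← map_mul]
      apply (QuotientGroup.mk'_eq_mk' _).mpr
      refine ⟨(z * y)⁻¹ * (y * z), ?_, by group⟩
      have : (z * y)⁻¹ * (y * z) = y⁻¹ * z⁻¹ * y * z := by group
      rw [this]
      exact comm_var₁ hyc z
    have hcommH := commutative_of_cyclic_center_quotient φ hker
    apply hne (m + 2) (by omega)
    rw [Subgroup.eq_top_iff']
    intro y
    rw [show m + 2 = (m + 1) + 1 from rfl, mem_upperCentralSeries_succ_iff]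
    intro z
    apply (QuotientGroup.eq_one_iff _).mp
    have hco : ((y * z * y⁻¹ * z⁻¹ : G) : G ⧸ Subgroup.upperCentralSeries G (m + 1))
        = ((y : G ⧸ Subgroup.upperCentralSeries G (m + 1)) * z) * (y : G ⧸ Subgroup.upperCentralSeries G (m + 1))⁻¹ * (z : G ⧸ Subgroup.upperCentralSeries G (m + 1))⁻¹ := by
      simp
    rw [commutatorElement_def, hco, hcommH (y : G ⧸ Subgroup.upperCentralSeries G (m + 1)) z]
    group
  have hFm2 : Nat.card (Subgroup.upperCentralSeries G (m + 2)) = p ^ (m + 2) := by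
    obtain ⟨e, he, hee⟩ := hFpow (m + 2)
    have hlow : p ^ (m + 2) ≤ p ^ e := hee ▸ hFlower (m + 2) (by omega)
    have helow : m + 2 ≤ e := (Nat.pow_le_pow_iff_right hp.one_lt).mp hlow
    have hupper : p ^ e < p ^ (m + 4) := by
      rw [← hee, ← hFtop]
      exact hFlt (m + 2) (by omega)
    have heup : e < m + 4 := (Nat.pow_lt_pow_iff_right hp.one_lt).mp hupper
    have hene : e ≠ m + 3 := fun h => hnotp (by rw [hee, h])
    rw [hee]
    congr 1
    omega
  have hFstep : ∀ i, i ≤ m + 2 → Nat.card (Subgroup.upperCentralSeries G i) = p ^ i := by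
    -- downward from m+2
    have key : ∀ j, Nat.card (Subgroup.upperCentralSeries G (m + 2 - j)) = p ^ (m + 2 - j) := by
      intro j
      induction j with
      | zero => exact hFm2
      | succ j ih =>
        rcases le_or_gt (j + 1) (m + 2) with hj | hj
        · obtain ⟨e, he, hee⟩ := hFpow (m + 2 - (j + 1))
          have hlow : p ^ (m + 2 - (j + 1)) ≤ p ^ e := hee ▸ hFlower _ (by omega)
          have helow : m + 2 - (j + 1) ≤ e := (Nat.pow_le_pow_iff_right hp.one_lt).mp hlow
          have hupper : p ^ e < p ^ (m + 2 - j) := by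
            rw [← hee, ← ih]
            have := hFlt (m + 2 - (j + 1)) (by omega)
            rwa [show m + 2 - (j + 1) + 1 = m + 2 - j by omega] at this
          have heup : e < m + 2 - j := (Nat.pow_lt_pow_iff_right hp.one_lt).mp hupper
          rw [hee]
          congr 1
          omega
        · rw [show m + 2 - (j + 1) = 0 by omega, hF0, pow_zero]
    intro i hi
    have := key (m + 2 - i)
    rwa [show m + 2 - (m + 2 - i) = i by omega] at this
  set N : Subgroup G := Subgroup.upperCentralSeries G m with hNdef
  have hNcard : Nat.card N = p ^ m := hFstep m (by omega)
  have hNidx : Nat.card (G ⧸ N) = p ^ 4 := by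
    rw [← Subgroup.index_eq_card]
    have h := Subgroup.card_mul_index N
    rw [hNcard, hcard'] at h
    have h2 : p ^ (m + 4) = p ^ m * p ^ 4 := by ring
    rw [h2] at h
    exact Nat.eq_of_mul_eq_mul_left (pow_pos hp.pos _) h
  have hNle : N ≤ Subgroup.upperCentralSeries G (m + 1) := upperCentralSeries_mono G (Nat.le_succ _)
  have hcenter : Subgroup.center (G ⧸ N)
      = (Subgroup.upperCentralSeries G (m + 1)).map (QuotientGroup.mk' N) := by
    ext q
    constructor
    · intro hq
      obtain ⟨y, rfl⟩ := QuotientGroup.mk'_surjective _ q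
      refine Subgroup.mem_map.mpr ⟨y, ?_, rfl⟩
      rw [show m + 1 = m + 1 from rfl, mem_upperCentralSeries_succ_iff]
      have hall : ∀ z : G, y⁻¹ * z⁻¹ * y * z ∈ N := by
        intro z
        have hc := Subgroup.mem_center_iff.mp hq (QuotientGroup.mk' N z)
        rw [← map_mul, ← map_mul] at hc
        obtain ⟨w, hwN, hw⟩ := (QuotientGroup.mk'_eq_mk' _).mp hc
        -- z * y * w = y * z with w ∈ N
        have : y⁻¹ * z⁻¹ * y * z = (z * y)⁻¹ * (y * z) := by group
        rw [this, ← hw]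
        have h2 : (z * y)⁻¹ * (z * y * w) = w := by group
        rw [h2]
        exact hwN
      exact fun z => comm_var₂ hall z
    · rintro ⟨y, hy, rfl⟩
      rw [Subgroup.mem_center_iff]
      intro q'
      obtain ⟨z, rfl⟩ := QuotientGroup.mk'_surjective _ q'
      rw [← map_mul, ← map_mul]
      apply (QuotientGroup.mk'_eq_mk' _).mpr
      refine ⟨(z * y)⁻¹ * (y * z), ?_, by group⟩
      have h1 : (z * y)⁻¹ * (y * z) = y⁻¹ * z⁻¹ * y * z := by group
      rw [h1]
      exact comm_var₁ (mem_upperCentralSeries_succ_iff.mp hy) z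
  have hZcard : Nat.card (Subgroup.center (G ⧸ N)) = p := by
    rw [hcenter]
    set K := Subgroup.upperCentralSeries G (m + 1) with hKdef
    set ψ : ↥K →* (G ⧸ N) := (QuotientGroup.mk' N).comp K.subtype with hψdef
    have hrange : ψ.range = K.map (QuotientGroup.mk' N) := by
      rw [hψdef, MonoidHom.range_comp, Subgroup.range_subtype]
    have hkerψ : ψ.ker = N.subgroupOf K := by
      ext u
      rw [hψdef, MonoidHom.mem_ker, MonoidHom.comp_apply]
      rw [Subgroup.mem_subgroupOf]
      exact QuotientGroup.eq_one_iff _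
    have h1 : ψ.ker.index = Nat.card ψ.range := Subgroup.index_ker ψ
    have h2 : Nat.card ψ.ker * ψ.ker.index = Nat.card ↥K := Subgroup.card_mul_index ψ.ker
    have h3 : Nat.card ψ.ker = p ^ m := by
      rw [hkerψ, Nat.card_congr (Subgroup.subgroupOfEquivOfLe hNle).toEquiv]
      exact hNcard
    have h4 : Nat.card ↥K = p ^ (m + 1) := hFstep (m + 1) (by omega)
    rw [h3, h1, h4] at h2
    have h5 : p ^ (m + 1) = p ^ m * p := by ring
    rw [h5] at h2
    have h6 := Nat.eq_of_mul_eq_mul_left (pow_pos hp.pos m) h2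
    rw [← hrange]
    exact h6
  obtain ⟨x', hx2, hx1⟩ := SetLike.exists_of_lt (hlt (m + 1) (by omega))
  refine ⟨hNidx, hZcard, QuotientGroup.mk' N x', ?_, ?_⟩
  · rw [hcenter]
    rintro ⟨y, hy, hyx⟩
    apply hx1
    obtain ⟨w, hwN, hw⟩ := (QuotientGroup.mk'_eq_mk' _).mp hyx
    rw [← hw]
    exact mul_mem hy (hNle hwN)
  · intro q
    obtain ⟨z, rfl⟩ := QuotientGroup.mk'_surjective _ q
    have hmem : x'⁻¹ * z⁻¹ * x' * z ∈ Subgroup.upperCentralSeries G (m + 1) :=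
      comm_var₁ (mem_upperCentralSeries_succ_iff.mp hx2) z
    rw [hcenter]
    refine Subgroup.mem_map.mpr ⟨_, hmem, ?_⟩
    simp only [map_mul, map_inv]; rfl

end PartI

/-- A maximal class `p`-group of order at least `p^4` has `p^3` as a codegree. -/
theorem maximal_class_p_cubed_codegree (p n : ℕ) (hp : p.Prime) (G : Type) [Group G] [Fintype G]
    (hcard : Fintype.card G = p ^ n) (hn : 4 ≤ n) (hmax : nilClass G = n - 1) :
    p ^ 3 ∈ codSet G := by
  have hmax' : sInf {k | upperCentralSeries G k = ⊤} = n - 1 := hmax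
  obtain ⟨hQ4, hZp, x, hx, hxc⟩ := partI hp hcard hn hmax'
  haveI : Fintype (G ⧸ Subgroup.upperCentralSeries G (n - 4)) := Fintype.ofFinite _
  obtain ⟨M, ρ, hrank, hfaith, hnz, hsub⟩ := partII hp hQ4 hZp x hx hxc
  refine ⟨FDRep.of (ρ.comp (QuotientGroup.mk' (Subgroup.upperCentralSeries G (n - 4)))), ?_, ?_⟩
  · apply simple_of_invariant_submodules
    · exact hnz
    · intro S hS
      apply hsub
      intro q v hv
      obtain ⟨g, rfl⟩ := QuotientGroup.mk'_surjective (Subgroup.upperCentralSeries G (n - 4)) q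
      exact hS g v hv
  · have hker : repKer (FDRep.of (ρ.comp (QuotientGroup.mk' (Subgroup.upperCentralSeries G (n - 4)))))
        = Subgroup.upperCentralSeries G (n - 4) := by
      ext g
      unfold repKer
      rw [MonoidHom.mem_ker]
      constructor
      · intro h
        have h2 : ρ (QuotientGroup.mk' (Subgroup.upperCentralSeries G (n - 4)) g) = 1 :=
          congrArg Units.val h
        have h4 := hfaith _ h2
        rw [← QuotientGroup.ker_mk' (Subgroup.upperCentralSeries G (n - 4))]
        exact h4
      · intro hg
        apply Units.ext
        show ρ (QuotientGroup.mk' (Subgroup.upperCentralSeries G (n - 4)) g) = 1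
        have h4 : QuotientGroup.mk' (Subgroup.upperCentralSeries G (n - 4)) g = 1 :=
          (QuotientGroup.eq_one_iff g).mpr hg
        rw [h4, map_one]
    have hdeg : repDegree (FDRep.of (ρ.comp (QuotientGroup.mk' (Subgroup.upperCentralSeries G (n - 4)))))
        = p := by
      unfold repDegree
      exact hrank
    have hidx : (repKer (FDRep.of
        (ρ.comp (QuotientGroup.mk' (Subgroup.upperCentralSeries G (n - 4)))))).index = p ^ 4 := by
      rw [hker, Subgroup.index_eq_card]
      exact hQ4
    show codegree _ = p ^ 3
    unfold codegree
    rw [hidx, hdeg]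
    have h5 : p ^ 4 = p ^ 3 * p := by ring
    rw [h5]
    exact Nat.mul_div_cancel _ hp.pos
end

section
/- Let p be a prime and let G be a finite abelian p-group with |G| = p^n ≥ p^2. Then cod(G) = {p^i | 0 ≤ i ≤ n-1} if and only if G is isomorphic to Z_{p^{n-1}} × Z_p. -/
open CategoryTheory

set_option linter.unusedSectionVars false

section Aux

variable {G : Type} [CommGroup G] [Fintype G]

noncomputable def charFDRep (χ : G →* ℂˣ) : FDRep ℂ G :=
  FDRep.of ((DistribMulAction.toModuleEnd ℂ ℂ).comp χ)

lemma charFDRep_ρ (χ : G →* ℂˣ) (g : G) (x : ℂ) : (charFDRep χ).ρ g x = (χ g : ℂ) * x := rfl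

lemma repDegree_charFDRep (χ : G →* ℂˣ) : repDegree (charFDRep χ) = 1 := Module.finrank_self ℂ

noncomputable def subrep (Y : FDRep ℂ G) (K : Submodule ℂ Y)
    (hK : ∀ g : G, ∀ x ∈ K, Y.ρ g x ∈ K) : FDRep ℂ G :=
  FDRep.of
    { toFun := fun g => (Y.ρ g).restrict (fun x hx => hK g x hx)
      map_one' := by ext x; simp [LinearMap.restrict_apply]
      map_mul' := fun g h => by ext x; simp [LinearMap.restrict_apply] }

noncomputable def subrepInc (Y : FDRep ℂ G) (K : Submodule ℂ Y)
    (hK : ∀ g : G, ∀ x ∈ K, Y.ρ g x ∈ K) : subrep Y K hK ⟶ Y where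
  hom := FGModuleCat.ofHom K.subtype
  comm := fun g => by ext x; rfl

lemma hom_comm_apply' {Y V : FDRep ℂ G} (f : Y ⟶ V) (g : G) (x : Y) :
    f.hom (Y.ρ g x) = V.ρ g (f.hom x) := by
  have h := f.comm g
  exact congrArg (fun φ : Y.V ⟶ V.V => φ x) h

lemma hom_eq_apply {Y V : FDRep ℂ G} {f f' : Y ⟶ V} (h : f = f') (x : Y) :
    f.hom x = f'.hom x := by rw [h]

theorem simple_of_finrank_one (V : FDRep ℂ G) (h : Module.finrank ℂ V = 1) : Simple V := by
  have hnt : Nontrivial V := Module.nontrivial_of_finrank_pos (R := ℂ) (h ▸ one_pos)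
  constructor
  intro Y f hm
  constructor
  · intro hiso h0
    obtain ⟨x, hx⟩ := exists_ne (0 : V)
    have h1 : (𝟙 V : V ⟶ V) = inv f ≫ 0 := by rw [← h0]; exact (IsIso.inv_hom_id f).symm
    rw [Limits.comp_zero] at h1
    have h2 := hom_eq_apply h1 x
    simp only [Action.id_hom, Action.zero_hom] at h2
    exact hx h2
  · intro h0
    have hinv : ∀ g : G, ∀ x ∈ LinearMap.ker (ConcreteCategory.hom (C := FGModuleCat ℂ) f.hom), Y.ρ g x ∈ LinearMap.ker (ConcreteCategory.hom (C := FGModuleCat ℂ) f.hom) := by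
      intro g x hx
      rw [LinearMap.mem_ker] at hx ⊢
      exact (hom_comm_apply' f g x).trans (by rw [hx, map_zero])
    have hcomp : subrepInc Y _ hinv ≫ f = 0 := by
      ext x
      exact x.2
    have hz : subrepInc Y _ hinv = 0 :=
      (cancel_mono f).mp (by rw [hcomp, Limits.zero_comp])
    have hinj : Function.Injective f.hom := by
      rw [← LinearMap.ker_eq_bot]
      ext x
      simp only [Submodule.mem_bot]
      constructor
      · intro hx
        exact hom_eq_apply hz (⟨x, hx⟩ : LinearMap.ker (ConcreteCategory.hom (C := FGModuleCat ℂ) f.hom))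
      · intro hx; simp [hx]
    have hfh : (ConcreteCategory.hom (C := FGModuleCat ℂ) f.hom : Y →ₗ[ℂ] V) ≠ 0 := by
      intro hfh
      apply h0
      ext x
      exact congrFun (congrArg (fun (q : Y →ₗ[ℂ] V) => (q : Y → V)) hfh) x
    have h' : Module.finrank ℂ ↑V.V = 1 := h
    have hsurj : Function.Surjective f.hom := by
      rw [← LinearMap.range_eq_top]
      apply Submodule.eq_top_of_finrank_eq
      rw [h']
      have h1 : Module.finrank ℂ (LinearMap.range (ConcreteCategory.hom (C := FGModuleCat ℂ) f.hom : Y →ₗ[ℂ] V)) ≤ 1 :=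
        h' ▸ Submodule.finrank_le _
      have h2 : LinearMap.range (ConcreteCategory.hom (C := FGModuleCat ℂ) f.hom : Y →ₗ[ℂ] V) ≠ ⊥ := by
        intro hb
        exact hfh (LinearMap.range_eq_bot.mp hb)
      have h3 : 0 < Module.finrank ℂ (LinearMap.range (ConcreteCategory.hom (C := FGModuleCat ℂ) f.hom : Y →ₗ[ℂ] V)) := by
        rcases Nat.eq_zero_or_pos (Module.finrank ℂ (LinearMap.range (ConcreteCategory.hom (C := FGModuleCat ℂ) f.hom : Y →ₗ[ℂ] V))) with h4 | h4
        · exact absurd (Submodule.finrank_eq_zero.mp h4) h2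
        · exact h4
      exact le_antisymm h1 h3
    let fl : (Y : Type) →ₗ[ℂ] (V : Type) := ConcreteCategory.hom (C := FGModuleCat ℂ) f.hom
    let el : (Y : Type) ≃ₗ[ℂ] (V : Type) := LinearEquiv.ofBijective fl ⟨hinj, hsurj⟩
    refine ⟨⟨⟨FGModuleCat.ofHom (el.symm : (V : Type) →ₗ[ℂ] (Y : Type)), fun g => ?_⟩, ?_, ?_⟩⟩
    · ext x
      apply hinj
      show fl (el.symm (V.ρ g x)) = fl (Y.ρ g (el.symm x))
      have e1 : fl (el.symm (V.ρ g x)) = V.ρ g x := el.apply_symm_apply _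
      have e2 : fl (Y.ρ g (el.symm x)) = V.ρ g (fl (el.symm x)) := hom_comm_apply' f g _
      have e3 : fl (el.symm x) = x := el.apply_symm_apply _
      rw [e1, e2, e3]
    · ext x
      exact el.symm_apply_apply x
    · ext x
      exact el.apply_symm_apply x

noncomputable def endoOf (V : FDRep ℂ G) (g : G) : V ⟶ V where
  hom := FGModuleCat.ofHom (V.ρ g)
  comm := fun h => by
    ext x
    change (V.ρ g) ((V.ρ h) x) = (V.ρ h) ((V.ρ g) x)
    rw [← Module.End.mul_apply, ← Module.End.mul_apply, ← map_mul, ← map_mul, mul_comm]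

theorem exists_char_of_simple (V : FDRep ℂ G) (hs : Simple V) :
    ∃ χ : G →* ℂˣ, Nonempty (charFDRep χ ≅ V) := by
  have hnt : Nontrivial V := by
    by_contra hnt
    have hss : Subsingleton V := not_nontrivial_iff_subsingleton.mp hnt
    apply id_nonzero V
    ext x
    exact @Subsingleton.elim _ hss _ _
  obtain ⟨v, hv⟩ := exists_ne (0 : V)
  have hc : ∀ g : G, ∃ c : ℂ, c • 𝟙 V = endoOf V g := fun g =>
    endomorphism_simple_eq_smul_id ℂ (endoOf V g)
  choose c hcs using hc
  have hp : ∀ g (x : V), V.ρ g x = c g • x := by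
    intro g x
    have h1 := hom_eq_apply (hcs g) x
    rw [Action.smul_hom] at h1
    exact h1.symm
  have hne : ∀ g, c g ≠ 0 := by
    intro g hg
    have h1 : V.ρ g (V.ρ g⁻¹ v) = v := by
      rw [← Module.End.mul_apply, ← map_mul, mul_inv_cancel, map_one, Module.End.one_apply]
    rw [hp g _, hg, zero_smul] at h1
    exact hv h1.symm
  have hmul : ∀ g h : G, c (g * h) = c g * c h := by
    intro g h
    have h1 : V.ρ (g * h) v = c (g * h) • v := hp _ v
    have h2 : V.ρ (g * h) v = (c g * c h) • v := by
      rw [map_mul, Module.End.mul_apply, hp, hp, smul_smul]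
    exact smul_left_injective ℂ (M := (V : Type)) hv (h1.symm.trans h2)
  let χ : G →* ℂˣ := MonoidHom.mk' (fun g => Units.mk0 (c g) (hne g))
    (fun g h => Units.ext (hmul g h))
  refine ⟨χ, ?_⟩
  let fl : ℂ →ₗ[ℂ] (V : Type) := LinearMap.toSpanSingleton ℂ _ v
  have hfl : ∀ z : ℂ, fl z = z • v := fun z => rfl
  let f : charFDRep χ ⟶ V :=
    { hom := FGModuleCat.ofHom fl
      comm := fun g => ConcreteCategory.hom_ext _ _ fun (z : ℂ) => by
        show fl ((χ g : ℂ) * z) = V.ρ g (fl z)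
        rw [hfl, hfl, hp g, smul_smul]
        rfl }
  have hf0 : f ≠ 0 := by
    intro h0
    have h1 := hom_eq_apply h0 (1 : ℂ)
    rw [Action.zero_hom] at h1
    simp only [LinearMap.zero_apply] at h1
    apply hv
    rw [← one_smul ℂ v]
    exact h1
  have hmono : Mono f := by
    constructor
    intro Z g1 g2 hgg
    ext x
    have h1 := hom_eq_apply hgg x
    rw [Action.comp_hom, Action.comp_hom] at h1
    simp only [ConcreteCategory.comp_apply, Function.comp_apply] at h1
    have h2 : (show ℂ from g1.hom x) • v = (show ℂ from g2.hom x) • v := h1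
    exact smul_left_injective ℂ (M := (V : Type)) hv h2
  have hiso : IsIso f := isIso_of_mono_of_nonzero hf0
  exact ⟨asIso f⟩

lemma repKer_charFDRep (χ : G →* ℂˣ) : repKer (charFDRep χ) = χ.ker := by
  ext g
  simp only [repKer, MonoidHom.mem_ker]
  rw [Units.ext_iff]
  change ((charFDRep χ).ρ g : (ℂ →ₗ[ℂ] ℂ)) = 1 ↔ _
  constructor
  · intro h
    have h1 : (charFDRep χ).ρ g (1 : ℂ) = (1 : ℂ →ₗ[ℂ] ℂ) (1 : ℂ) := by rw [h]; rfl
    have h2 : (χ g : ℂ) * 1 = 1 := h1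
    ext
    rw [mul_one] at h2
    exact h2
  · intro h
    exact LinearMap.ext fun (x : ℂ) => by
      show (χ g : ℂ) * x = x
      rw [h]
      simp

lemma ker_index_eq_orderOf (χ : G →* ℂˣ) : χ.ker.index = orderOf χ := by
  have hfin : Finite χ.range := Set.finite_range χ |>.subset (by intro x hx; exact hx) |>.to_subtype
  have hcyc : IsCyclic χ.range := subgroup_units_cyclic χ.range
  have h1 : χ.ker.index = Nat.card χ.range :=
    Nat.card_congr (QuotientGroup.quotientKerEquivRange χ).toEquiv
  have h2 : Monoid.exponent χ.range = Nat.card χ.range := IsCyclic.exponent_eq_card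
  rw [h1, ← h2]
  apply Nat.dvd_antisymm
  · apply Monoid.exponent_dvd_of_forall_pow_eq_one
    rintro ⟨y, g, rfl⟩
    have : (χ ^ orderOf χ) g = 1 := by rw [pow_orderOf_eq_one]; rfl
    ext
    push_cast
    exact congrArg Units.val this
  · apply orderOf_dvd_of_pow_eq_one
    ext g
    have : (⟨χ g, ⟨g, rfl⟩⟩ : χ.range) ^ Monoid.exponent χ.range = 1 :=
      Monoid.pow_exponent_eq_one _
    have h3 : (χ g) ^ Monoid.exponent χ.range = 1 := by
      have h4 := congrArg (Subtype.val) this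
      simpa using h4
    have h5 := congrArg Units.val h3
    simpa using h5

lemma mem_repKer_iff (V : FDRep ℂ G) (g : G) : g ∈ repKer V ↔ V.ρ g = 1 := by
  simp only [repKer, MonoidHom.mem_ker]
  rw [Units.ext_iff, Representation.asGroupHom_apply, Units.val_one]

lemma repKer_eq_of_iso {V W : FDRep ℂ G} (e : V ≅ W) : repKer V = repKer W := by
  ext g
  rw [mem_repKer_iff, mem_repKer_iff, FDRep.Iso.conj_ρ e]
  constructor
  · intro h
    rw [h]
    show (FDRep.isoToLinearEquiv e).conj LinearMap.id = LinearMap.id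
    rw [LinearEquiv.conj_id]
  · intro h
    have h1 : (FDRep.isoToLinearEquiv e).conj (1 : (V : Type) →ₗ[ℂ] (V : Type)) = 1 := by
      show (FDRep.isoToLinearEquiv e).conj LinearMap.id = LinearMap.id
      rw [LinearEquiv.conj_id]
    exact (FDRep.isoToLinearEquiv e).conj.injective (h.trans h1.symm)

lemma repDegree_eq_of_iso {V W : FDRep ℂ G} (e : V ≅ W) : repDegree V = repDegree W :=
  (FDRep.isoToLinearEquiv e).finrank_eq

lemma codegree_charFDRep (χ : G →* ℂˣ) : codegree (charFDRep χ) = orderOf χ := by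
  rw [codegree, repKer_charFDRep, ker_index_eq_orderOf]
  show orderOf χ / Module.finrank ℂ ℂ = orderOf χ
  rw [Module.finrank_self, Nat.div_one]

theorem codSet_eq_orderSet : codSet G = {d | ∃ g : G, orderOf g = d} := by
  have he : NeZero ((Monoid.exponent G : ℕ) : ℂ) :=
    ⟨Nat.cast_ne_zero.mpr Monoid.exponent_ne_zero_of_finite⟩
  obtain ⟨φ⟩ := CommGroup.monoidHom_mulEquiv_of_hasEnoughRootsOfUnity G ℂ
  ext d
  constructor
  · rintro ⟨V, hs, rfl⟩
    obtain ⟨χ, ⟨e⟩⟩ := exists_char_of_simple V hs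
    refine ⟨φ χ, ?_⟩
    have hcv : codegree V = orderOf χ := by
      rw [codegree, ← repKer_eq_of_iso e, ← repDegree_eq_of_iso e, repKer_charFDRep]
      show χ.ker.index / Module.finrank ℂ ℂ = orderOf χ
      rw [Module.finrank_self, Nat.div_one, ker_index_eq_orderOf]
    rw [MulEquiv.orderOf_eq φ χ, hcv]
  · rintro ⟨g, rfl⟩
    refine ⟨charFDRep (φ.symm g), simple_of_finrank_one _ (Module.finrank_self ℂ), ?_⟩
    rw [codegree_charFDRep]
    exact MulEquiv.orderOf_eq φ.symm g


end Aux

noncomputable def piToProd {ι : Type} (M : ι → Type) [∀ i, CommGroup (M i)] (i0 j0 : ι)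
    (hne : j0 ≠ i0) (hall : ∀ i, i = i0 ∨ i = j0) : (∀ i, M i) ≃* M i0 × M j0 := by
  classical
  exact
  { toFun := fun f => (f i0, f j0)
    invFun := fun x => fun i =>
      if h : i = i0 then cast (congrArg M h).symm x.1
      else cast (congrArg M ((hall i).resolve_left h)).symm x.2
    left_inv := fun f => by
      funext i
      rcases hall i with h | h <;> subst h
      · simp
      · by_cases h2 : i = i0
        · subst h2; simp
        · simp [h2]
    right_inv := fun x => by
      ext
      · simp
      · simp [hne]
    map_mul' := fun f g => rfl }

noncomputable def zmodMulCongr {a b : ℕ} (h : a = b) :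
    Multiplicative (ZMod a) ≃* Multiplicative (ZMod b) := by
  subst h; exact MulEquiv.refl _

theorem orderSet_iff (p n : ℕ) (hp : p.Prime) (G : Type) [CommGroup G] [Fintype G]
    (hcard : Fintype.card G = p ^ n) (hn : 2 ≤ n) :
    {d | ∃ g : G, orderOf g = d} = {m | ∃ i ≤ n - 1, m = p ^ i} ↔
      Nonempty (G ≃* Multiplicative (ZMod (p ^ (n - 1))) × Multiplicative (ZMod p)) := by
  classical
  have hp1 : 1 < p := hp.one_lt
  constructor
  · intro hset
    -- there is an element of order p^(n-1)
    have hmem : (p : ℕ) ^ (n - 1) ∈ {d | ∃ g : G, orderOf g = d} := by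
      rw [hset]; exact ⟨n - 1, le_refl _, rfl⟩
    obtain ⟨g0, hg0⟩ := hmem
    -- classification
    obtain ⟨ι, hι, m, h1, ⟨e⟩⟩ := CommGroup.equiv_prod_multiplicative_zmod_of_finite G
    have hNZ : ∀ i, NeZero (m i) := fun i => ⟨by have := h1 i; omega⟩
    have hcards : ∏ i, m i = p ^ n := by
      have h0 : Nat.card G = p ^ n := by rw [Nat.card_eq_fintype_card, hcard]
      rw [← h0, Nat.card_congr e.toEquiv, Nat.card_pi]
      exact Finset.prod_congr rfl fun i _ => by
        simp [Nat.card_zmod]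
    -- each m i is an element order
    have hordmi : ∀ i, ∃ g : G, orderOf g = m i := by
      intro i
      classical
      refine ⟨e.symm (Pi.mulSingle i (Multiplicative.ofAdd 1)), ?_⟩
      rw [MulEquiv.orderOf_eq, orderOf_piMulSingle, orderOf_ofAdd_eq_addOrderOf,
        ZMod.addOrderOf_one]
    have hk : ∀ i, ∃ k ≤ n - 1, m i = p ^ k := by
      intro i
      obtain ⟨g, hg⟩ := hordmi i
      have : m i ∈ {m | ∃ i ≤ n - 1, m = p ^ i} := by rw [← hset]; exact ⟨g, hg⟩
      exact this
    choose k hkle hkm using hk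
    have hk1 : ∀ i, 1 ≤ k i := by
      intro i
      have h2 := h1 i
      have h3 := hkm i
      by_contra h
      have hk0 : k i = 0 := by omega
      rw [hk0, pow_zero] at h3
      omega
    -- sum of k = n
    have hsum : ∑ i, k i = n := by
      have : ∏ i, p ^ k i = p ^ n := by
        rw [← hcards]
        exact Finset.prod_congr rfl fun i _ => (hkm i).symm
      rw [Finset.prod_pow_eq_pow_sum] at this
      exact Nat.pow_right_injective hp.two_le this
    -- nonempty ι
    have hne : Nonempty ι := by
      by_contra h
      rw [not_nonempty_iff] at h
      have : (Finset.univ : Finset ι) = ∅ := Finset.univ_eq_empty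
      rw [this, Finset.sum_empty] at hsum
      omega
    -- max k ≥ n-1 : from g0
    have hdvd : ∀ i (x : Multiplicative (ZMod (m i))), orderOf x ∣ m i := by
      intro i x
      have h2 := orderOf_dvd_natCard x
      have h3 : Nat.card (Multiplicative (ZMod (m i))) = m i := by simp [Nat.card_zmod]
      rwa [h3] at h2
    have hMle : Finset.univ.sup k ≤ n - 1 := Finset.sup_le fun i _ => hkle i
    have hpow1 : (e g0) ^ (p ^ Finset.univ.sup k) = 1 := by
      funext i
      have h2 : orderOf (e g0 i) ∣ p ^ Finset.univ.sup k := by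
        refine dvd_trans (hdvd i _) ?_
        rw [hkm i]
        exact pow_dvd_pow p (Finset.le_sup (Finset.mem_univ i))
      calc (e g0 ^ p ^ Finset.univ.sup k) i = (e g0 i) ^ (p ^ Finset.univ.sup k) := rfl
        _ = 1 := orderOf_dvd_iff_pow_eq_one.mp h2
    have hdvd2 : p ^ (n - 1) ∣ p ^ Finset.univ.sup k := by
      rw [← hg0]
      rw [← MulEquiv.orderOf_eq e]
      exact orderOf_dvd_of_pow_eq_one hpow1
    have hMge : n - 1 ≤ Finset.univ.sup k := (Nat.pow_dvd_pow_iff_le_right hp1).mp hdvd2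
    obtain ⟨i0, _, hi0⟩ := Finset.exists_mem_eq_sup Finset.univ Finset.univ_nonempty k
    have hki0 : k i0 = n - 1 := by omega
    -- rest sums to 1
    have hrest : ∑ i ∈ Finset.univ.erase i0, k i = 1 := by
      have := Finset.add_sum_erase Finset.univ k (Finset.mem_univ i0)
      omega
    obtain ⟨j0, hj0mem, hj0ne⟩ : ∃ j ∈ Finset.univ.erase i0, k j ≠ 0 := by
      apply Finset.exists_ne_zero_of_sum_ne_zero
      omega
    have hj0i0 : j0 ≠ i0 := (Finset.mem_erase.mp hj0mem).1
    have hkj0 : k j0 = 1 := by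
      have h2 := Finset.add_sum_erase (Finset.univ.erase i0) k hj0mem
      have h3 := hk1 j0
      have h4 : ∑ i ∈ (Finset.univ.erase i0).erase j0, k i ≥ 0 := Nat.zero_le _
      omega
    have hempty : ∀ i, i = i0 ∨ i = j0 := by
      intro i
      by_contra h
      push_neg at h
      obtain ⟨hi1, hi2⟩ := h
      have hmem2 : i ∈ (Finset.univ.erase i0).erase j0 :=
        Finset.mem_erase.mpr ⟨hi2, Finset.mem_erase.mpr ⟨hi1, Finset.mem_univ i⟩⟩
      have h2 := Finset.add_sum_erase (Finset.univ.erase i0) k hj0mem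
      have h3 := Finset.add_sum_erase ((Finset.univ.erase i0).erase j0) k hmem2
      have := hk1 i
      omega
    -- assemble equiv
    refine ⟨?_⟩
    refine e.trans ?_
    refine (piToProd (fun i => Multiplicative (ZMod (m i))) i0 j0 hj0i0 hempty).trans ?_
    have hmi0 : m i0 = p ^ (n - 1) := by rw [hkm i0, hki0]
    have hmj0 : m j0 = p := by rw [hkm j0, hkj0, pow_one]
    exact MulEquiv.prodCongr (zmodMulCongr hmi0) (zmodMulCongr hmj0)
  · rintro ⟨e⟩
    ext d
    simp only [Set.mem_setOf_eq]
    constructor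
    · rintro ⟨g, rfl⟩
      have h2 : orderOf g ∣ p ^ (n - 1) := by
        rw [← MulEquiv.orderOf_eq e]
        apply orderOf_dvd_of_pow_eq_one
        have hNZ1 : NeZero (p ^ (n - 1)) := ⟨pow_ne_zero _ hp.ne_zero⟩
        have hNZ2 : NeZero p := ⟨hp.ne_zero⟩
        ext
        · show ((e g).1 ^ (p ^ (n - 1))) = 1
          have h2 := orderOf_dvd_natCard (e g).1
          have h3 : Nat.card (Multiplicative (ZMod (p ^ (n - 1)))) = p ^ (n - 1) := by
            simp [Nat.card_zmod]
          rw [h3] at h2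
          exact orderOf_dvd_iff_pow_eq_one.mp h2
        · show ((e g).2 ^ (p ^ (n - 1))) = 1
          have h2 := orderOf_dvd_natCard (e g).2
          have h3 : Nat.card (Multiplicative (ZMod p)) = p := by simp [Nat.card_zmod]
          rw [h3] at h2
          have h4 : orderOf (e g).2 ∣ p ^ (n - 1) :=
            dvd_trans h2 (dvd_pow_self p (by omega : n - 1 ≠ 0))
          exact orderOf_dvd_iff_pow_eq_one.mp h4
      obtain ⟨i, hile, hieq⟩ := (Nat.dvd_prime_pow hp).mp h2
      exact ⟨i, by omega, hieq⟩
    · rintro ⟨i, hile, rfl⟩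
      have hNZ1 : NeZero (p ^ (n - 1)) := ⟨pow_ne_zero _ hp.ne_zero⟩
      refine ⟨e.symm (Multiplicative.ofAdd ((p ^ (n - 1 - i) : ℕ) : ZMod (p ^ (n - 1))), 1), ?_⟩
      rw [MulEquiv.orderOf_eq, Prod.orderOf_mk, orderOf_one, Nat.lcm_one_right,
        orderOf_ofAdd_eq_addOrderOf, ZMod.addOrderOf_coe _ (pow_ne_zero _ hp.ne_zero)]
      have hgcd : Nat.gcd (p ^ (n - 1)) (p ^ (n - 1 - i)) = p ^ (n - 1 - i) :=
        Nat.gcd_eq_right (pow_dvd_pow p (by omega))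
      rw [hgcd, Nat.pow_div (by omega) (by omega)]
      congr 1
      omega


/-- An abelian `p`-group of order `p^n ≥ p^2` has `cod(G) = {p^i | 0 ≤ i ≤ n-1}` iff
`G ≅ ℤ_{p^{n-1}} × ℤ_p`. -/
theorem abelian_full_codegrees_iff (p n : ℕ) (hp : p.Prime) (G : Type) [CommGroup G] [Fintype G]
    (hcard : Fintype.card G = p ^ n) (hn : 2 ≤ n) :
    codSet G = {m | ∃ i ≤ n - 1, m = p ^ i} ↔
      Nonempty (G ≃* Multiplicative (ZMod (p ^ (n - 1))) × Multiplicative (ZMod p)) := by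
  rw [codSet_eq_orderSet]
  exact orderSet_iff p n hp G hcard hn
end

section
/- Let p be a prime and let G be a normally monomial finite p-group. If χ is a faithful irreducible complex character of G, then χ(1) = b(G), where b(G) = max{θ(1) | θ ∈ Irr(G)}; moreover χ is induced from a linear character of a normal abelian subgroup of G of index χ(1). -/
open CategoryTheory

section Aux
open Polynomial

theorem charpoly_root_pow_eq_one {d n : ℕ} (M : Matrix (Fin d) (Fin d) ℂ) (hM : M ^ n = 1)
    (μ : ℂ) (hμ : μ ∈ M.charpoly.roots) : μ ^ n = 1 := by
  have hroot : M.charpoly.IsRoot μ := isRoot_of_mem_roots hμ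
  have heval : (M.charpoly).eval μ = (μ • (1 : Matrix (Fin d) (Fin d) ℂ) - M).det := by
    rw [Matrix.charpoly, ← Polynomial.coe_evalRingHom, RingHom.map_det]
    congr 1
    ext i j
    by_cases h : i = j <;>
      simp [Matrix.charmatrix_apply, Matrix.one_apply, h, Matrix.smul_apply, mul_comm]
  have hdet : (μ • (1 : Matrix (Fin d) (Fin d) ℂ) - M).det = 0 := by
    rw [← heval]; exact hroot
  obtain ⟨v, hv0, hv⟩ := Matrix.exists_mulVec_eq_zero_iff.mpr hdet
  have hMv : M.mulVec v = μ • v := by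
    have h2 := hv
    rw [Matrix.sub_mulVec, sub_eq_zero] at h2
    rw [← h2, Matrix.smul_mulVec, Matrix.one_mulVec]
  have hpow : ∀ k : ℕ, (M ^ k).mulVec v = μ ^ k • v := by
    intro k; induction k with
    | zero => simp
    | succ k ih =>
        rw [pow_succ', ← Matrix.mulVec_mulVec, ih, Matrix.mulVec_smul, hMv,
          smul_smul, pow_succ', mul_comm]
  have hfix := hpow n
  rw [hM, Matrix.one_mulVec] at hfix
  obtain ⟨i, hi⟩ := Function.ne_iff.mp hv0
  have h3 : v i = μ ^ n * v i := by
    conv_lhs => rw [hfix]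
    simp [Pi.smul_apply]
  have h4 : (μ ^ n - 1) * v i = 0 := by ring_nf; linear_combination -h3
  rcases mul_eq_zero.mp h4 with h | h
  · exact sub_eq_zero.mp h
  · exact absurd h (by simpa using hi)

theorem matrix_eq_one_of_trace {d n : ℕ} (hn : 0 < n) (M : Matrix (Fin d) (Fin d) ℂ)
    (hM : M ^ n = 1) (htr : M.trace = d) : M = 1 := by
  rcases Nat.eq_zero_or_pos d with hd | hd
  · subst hd; ext i; exact absurd i.2 (by simp)
  -- all roots of charpoly equal 1
  have hsplit : M.charpoly.Splits := IsAlgClosed.splits _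
  have hcard : Multiset.card M.charpoly.roots = d := by
    rw [(Polynomial.splits_iff_card_roots).mp hsplit, Matrix.charpoly_natDegree_eq_dim,
      Fintype.card_fin]
  have htr' : M.charpoly.roots.sum = (d : ℂ) := by
    rw [← Matrix.trace_eq_sum_roots_charpoly, htr]
  have habs : ∀ μ ∈ M.charpoly.roots, ‖μ‖ = 1 := by
    intro μ hμ
    have h1 : μ ^ n = 1 := charpoly_root_pow_eq_one M hM μ hμ
    have h2 : ‖μ‖ ^ n = 1 := by rw [← norm_pow, h1, norm_one]
    by_contra hne
    rcases lt_or_gt_of_ne hne with hlt | hgt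
    · exact absurd h2 (ne_of_lt (pow_lt_one₀ (norm_nonneg μ) hlt hn.ne'))
    · exact absurd h2 (ne_of_gt (one_lt_pow₀ hgt hn.ne'))
  have hall : ∀ μ ∈ M.charpoly.roots, μ = 1 := by
    by_contra hcon
    push_neg at hcon
    obtain ⟨μ₀, hμ₀, hne⟩ := hcon
    set t : Multiset ℝ := M.charpoly.roots.map (fun μ => 1 - μ.re) with ht
    have htnonneg : ∀ x ∈ t, (0:ℝ) ≤ x := by
      rintro x hx
      obtain ⟨μ, hμ, rfl⟩ := Multiset.mem_map.mp hx
      have := Complex.re_le_norm μ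
      rw [habs μ hμ] at this
      linarith
    have htsum : t.sum = 0 := by
      have hre : (M.charpoly.roots.map (fun μ : ℂ => μ.re)).sum = (d:ℝ) := by
        have h6 := congrArg Complex.re htr'
        rw [← Complex.coe_reAddGroupHom, AddMonoidHom.map_multiset_sum] at h6
        simpa [Complex.coe_reAddGroupHom] using h6
      have : t.sum = (M.charpoly.roots.map (fun _ : ℂ => (1:ℝ))).sum
          - (M.charpoly.roots.map (fun μ : ℂ => μ.re)).sum := by
        rw [← Multiset.sum_map_sub]
      rw [this, hre, Multiset.map_const', Multiset.sum_replicate, hcard]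
      simp
    have hx0 : (1 - μ₀.re) ∈ t := Multiset.mem_map_of_mem _ hμ₀
    have hpos : 0 < 1 - μ₀.re := by
      have hle : μ₀.re ≤ 1 := by
        have := Complex.re_le_norm μ₀; rw [habs μ₀ hμ₀] at this; linarith
      rcases lt_or_eq_of_le hle with h | h
      · linarith
      · exfalso
        apply hne
        have habs0 := habs μ₀ hμ₀
        have him : μ₀.im = 0 := by
          have := Complex.sq_norm μ₀
          rw [habs0] at this
          simp [Complex.normSq_apply] at this
          nlinarith [sq_nonneg μ₀.im]
        apply Complex.ext <;> simp [h, him]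
    have : (0:ℝ) < t.sum := by
      have h5 : t = (1 - μ₀.re) ::ₘ t.erase (1 - μ₀.re) := (Multiset.cons_erase hx0).symm
      rw [h5, Multiset.sum_cons]
      have : (0:ℝ) ≤ (t.erase (1 - μ₀.re)).sum :=
        Multiset.sum_nonneg fun x hx => htnonneg x (Multiset.mem_of_mem_erase hx)
      linarith
    rw [htsum] at this
    exact lt_irrefl _ this
  -- charpoly = (X - C 1) ^ d
  have hcp : M.charpoly = (X - C (1:ℂ)) ^ d := by
    have := hsplit.eq_prod_roots_of_monic M.charpoly_monic
    rw [this]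
    have : M.charpoly.roots.map (fun a : ℂ => X - C a)
        = Multiset.replicate d (X - C (1:ℂ)) := by
      apply Multiset.eq_replicate.mpr
      constructor
      · rw [Multiset.card_map, hcard]
      · intro b hb
        obtain ⟨μ, hμ, rfl⟩ := Multiset.mem_map.mp hb
        rw [hall μ hμ]
    rw [this, Multiset.prod_replicate]
  -- minpoly analysis
  have hint : IsIntegral ℂ M := ⟨M.charpoly, M.charpoly_monic, M.aeval_self_charpoly⟩
  have hsq : Squarefree (X ^ n - 1 : ℂ[X]) :=
    (Polynomial.X_pow_sub_one_separable_iff.mpr (by exact_mod_cast hn.ne')).squarefree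
  have hdvd1 : minpoly ℂ M ∣ X ^ n - 1 := minpoly.dvd ℂ M (by
    simp [map_pow, aeval_X, map_sub, hM])
  have hdvd2 : minpoly ℂ M ∣ (X - C (1:ℂ)) ^ d := by
    rw [← hcp]; exact M.minpoly_dvd_charpoly
  have hprime : Prime (X - C (1:ℂ)) := Polynomial.prime_X_sub_C 1
  obtain ⟨k, hk, hassoc⟩ := (dvd_prime_pow hprime d).mp hdvd2
  haveI : Nonempty (Fin d) := ⟨⟨0, hd⟩⟩
  have hk1 : k = 1 := by
    rcases k with _ | _ | k
    · exfalso
      have : IsUnit (minpoly ℂ M) := by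
        rw [pow_zero] at hassoc
        exact associated_one_iff_isUnit.mp hassoc
      exact (minpoly.not_isUnit ℂ M) this
    · rfl
    · exfalso
      have hdd : (X - C (1:ℂ)) * (X - C (1:ℂ)) ∣ X ^ n - 1 := by
        refine dvd_trans ?_ hdvd1
        refine dvd_trans ?_ hassoc.symm.dvd
        rw [← pow_two]
        exact pow_dvd_pow _ (by omega)
      exact Polynomial.not_isUnit_X_sub_C 1 (hsq _ hdd)
  rw [hk1, pow_one] at hassoc
  have hqeq : minpoly ℂ M = X - C (1:ℂ) :=
    Polynomial.eq_of_monic_of_associated (minpoly.monic hint) (monic_X_sub_C 1) hassoc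
  have := minpoly.aeval ℂ M
  rw [hqeq] at this
  simp only [map_sub, aeval_X, aeval_C] at this
  rw [sub_eq_zero] at this
  simpa using this

theorem rho_eq_one_of_char {G : Type} [Group G] [Fintype G] (V : FDRep ℂ G) (g : G)
    (h : V.character g = (Module.finrank ℂ V : ℂ)) : V.ρ g = 1 := by
  set d := Module.finrank ℂ V with hd
  rcases Nat.eq_zero_or_pos d with h0 | h0
  · haveI : Subsingleton V := by
      rw [← Module.finrank_zero_iff (R := ℂ) (M := V)]; omega
    exact LinearMap.ext fun x => Subsingleton.elim _ _
  · let b : Module.Basis (Fin d) ℂ V := Module.finBasis ℂ V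
    set M := LinearMap.toMatrixAlgEquiv b (V.ρ g) with hM
    have hn : 0 < orderOf g := orderOf_pos g
    have hpow : M ^ orderOf g = 1 := by
      rw [hM, ← map_pow, ← map_pow V.ρ, pow_orderOf_eq_one, map_one, map_one]
    have htr : M.trace = (d : ℂ) := by
      have h1 : M.trace = LinearMap.trace ℂ V (V.ρ g) := by
        rw [LinearMap.trace_eq_matrix_trace ℂ b (V.ρ g)]
        rfl
      rw [h1, ← h]
      rfl
    have hM1 := matrix_eq_one_of_trace hn M hpow htr
    exact (LinearMap.toMatrixAlgEquiv b).injective (by rw [map_one, ← hM]; exact hM1)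

theorem indLinearChar_value {G : Type} [Group G] [Fintype G] (H : Subgroup G) (lam : H →* ℂˣ)
    (g : G) (hg : ∀ x : G, ∃ hx : x * g * x⁻¹ ∈ H, lam ⟨x * g * x⁻¹, hx⟩ = 1) :
    indLinearChar H lam g = (Fintype.card G : ℂ) / (Nat.card H : ℂ) := by
  classical
  unfold indLinearChar
  congr 1
  have h5 : ∀ x : G, (if h : x * g * x⁻¹ ∈ H then ((lam ⟨x * g * x⁻¹, h⟩ : ℂˣ) : ℂ) else 0)
      = 1 := by
    intro x
    obtain ⟨hx, hval⟩ := hg x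
    rw [dif_pos hx, hval]
    rfl
  rw [Finset.sum_congr rfl (fun x _ => h5 x)]
  simp

theorem ind_index {G : Type} [Group G] [Fintype G] (V : FDRep ℂ G) (H : Subgroup G)
    (lam : H →* ℂˣ) (hchar : FDRep.character V = indLinearChar H lam) :
    H.index = repDegree V := by
  have h1 := congrFun hchar 1
  rw [FDRep.char_one] at h1
  rw [indLinearChar_value H lam 1 (by
    intro x
    have hx1 : x * 1 * x⁻¹ = 1 := by group
    have hmem : x * 1 * x⁻¹ ∈ H := by rw [hx1]; exact H.one_mem
    refine ⟨hmem, ?_⟩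
    have : (⟨x * 1 * x⁻¹, hmem⟩ : H) = 1 := Subtype.ext hx1
    rw [this, map_one])] at h1
  have hHpos : 0 < Nat.card H := Nat.card_pos
  have hmul : Nat.card H * H.index = Nat.card G := H.card_mul_index
  have hne : (Nat.card H : ℂ) ≠ 0 := Nat.cast_ne_zero.mpr hHpos.ne'
  have h2 : ((Module.finrank ℂ V : ℂ)) * (Nat.card H : ℂ) = (Fintype.card G : ℂ) := by
    field_simp at h1
    linear_combination h1
  have h3 : ((H.index : ℂ)) * (Nat.card H : ℂ) = (Fintype.card G : ℂ) := by
    rw [← Nat.card_eq_fintype_card, ← hmul]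
    push_cast
    ring
  have h4 : ((H.index : ℂ)) = (Module.finrank ℂ V : ℂ) := by
    have h5 := h2.trans h3.symm
    exact mul_right_cancel₀ hne h5.symm
  have : H.index = Module.finrank ℂ V := by exact_mod_cast h4
  exact this

noncomputable def subRep {G : Type} [Group G] (W : FDRep ℂ G) (U : Submodule ℂ W)
    (hU : ∀ (g : G) x, x ∈ U → W.ρ g x ∈ U) : FDRep ℂ G :=
  FDRep.of
    { toFun := fun g => (W.ρ g).restrict (fun x hx => hU g x hx)
      map_one' := by ext x; simp
      map_mul' := by intro g h; ext x; simp }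

theorem invariant_eq_top {G : Type} [Group G] (W : FDRep ℂ G) (hW : Simple W)
    (U : Submodule ℂ W) (hU : ∀ (g : G) x, x ∈ U → W.ρ g x ∈ U) (hne : U ≠ ⊥) : U = ⊤ := by
  haveI := hW
  let X := subRep W U hU
  let f : X ⟶ W := { hom := FGModuleCat.ofHom U.subtype, comm := fun g => by ext x; rfl }
  haveI hmono : Mono f := by
    constructor
    intro Z u v huv
    apply Action.Hom.ext
    have h1 := congrArg Action.Hom.hom huv
    ext z
    have h2 := congrFun (congrArg (fun (m : Z.V ⟶ W.V) => (m.hom.hom : Z.V → W.V)) h1) z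
    apply Subtype.ext
    exact h2
  have hfne : f ≠ 0 := by
    obtain ⟨u, hu, hune⟩ := Submodule.exists_mem_ne_zero_of_ne_bot hne
    intro hf
    have := congrFun (congrArg (fun (m : X.V ⟶ W.V) => (m.hom.hom : X.V → W.V))
      (congrArg Action.Hom.hom hf)) ⟨u, hu⟩
    simp at this
    exact hune this
  haveI : IsIso f := isIso_of_mono_of_nonzero hfne
  rw [Submodule.eq_top_iff']
  intro w
  have hinv := congrArg Action.Hom.hom (IsIso.inv_hom_id f)
  have h3 := congrFun (congrArg (fun (m : W.V ⟶ W.V) => (m.hom.hom : W.V → W.V)) hinv) w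
  rw [show (inv f ≫ f).hom = ((inv f).hom ≫ f.hom) from rfl] at h3
  have : f.hom ((inv f).hom w) = w := h3
  rw [show f.hom = FGModuleCat.ofHom U.subtype from rfl] at this
  exact this ▸ ((inv f).hom w).2

theorem simple_nontrivial {G : Type} [Group G] (W : FDRep ℂ G) (hW : Simple W) :
    Nontrivial W := by
  haveI := hW
  by_contra h
  haveI hss : Subsingleton W := not_nontrivial_iff_subsingleton.mp h
  apply CategoryTheory.id_nonzero W
  apply Action.Hom.ext
  apply InducedCategory.hom_ext
  apply ModuleCat.hom_ext
  apply LinearMap.ext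
  intro x
  exact Subsingleton.elim (α := W) _ _


theorem finrank_le_index {G : Type} [Group G] [Fintype G] (W : FDRep ℂ G) (hW : Simple W)
    (H : Subgroup G) (hcomm : ∀ a b : H, a * b = b * a) :
    Module.finrank ℂ W ≤ H.index := by
  classical
  haveI hnt : Nontrivial W := simple_nontrivial W hW
  set S : Set (Submodule ℂ W.V) :=
    {L | L ≠ ⊥ ∧ ∀ (h : H) x, x ∈ L → W.ρ (h : G) x ∈ L} with hS
  have htop : (⊤ : Submodule ℂ W.V) ∈ S := by
    constructor
    · intro hbot
      obtain ⟨x, hx⟩ := exists_ne (0 : W)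
      apply hx
      have hxt : x ∈ (⊤ : Submodule ℂ W.V) := Submodule.mem_top
      rw [hbot] at hxt
      simpa using hxt
    · intro h x _; trivial
  have hne : {k | ∃ L ∈ S, Module.finrank ℂ L = k}.Nonempty := ⟨_, ⊤, htop, rfl⟩
  obtain ⟨L, hLS, hLrank⟩ := Nat.sInf_mem hne
  have hminL : ∀ L' ∈ S, Module.finrank ℂ L ≤ Module.finrank ℂ L' := by
    intro L' hL'
    rw [hLrank]
    exact Nat.sInf_le ⟨L', hL', rfl⟩
  have hscal : ∀ h : H, ∃ c : ℂ, ∀ x ∈ L, W.ρ (h : G) x = c • x := by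
    intro h
    haveI : Nontrivial L := Submodule.nontrivial_iff_ne_bot.mpr hLS.1
    let e : Module.End ℂ L := (W.ρ (h : G)).restrict (fun x hx => hLS.2 h x hx)
    obtain ⟨c, hc⟩ := Module.End.exists_eigenvalue e
    obtain ⟨v, hv⟩ := hc.exists_hasEigenvector
    have kmem : ∀ (x : W.V), x ∈ LinearMap.ker (W.ρ (h : G) - c • LinearMap.id)
        ↔ W.ρ (h : G) x = c • x := by
      intro x
      rw [LinearMap.mem_ker, LinearMap.sub_apply, LinearMap.smul_apply]
      simp only [sub_eq_zero]
      exact Iff.rfl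
    refine ⟨c, ?_⟩
    set E : Submodule ℂ W.V := L ⊓ LinearMap.ker (W.ρ (h : G) - c • LinearMap.id) with hE
    have hES : E ∈ S := by
      constructor
      · rw [Submodule.ne_bot_iff]
        refine ⟨(v : W.V), Submodule.mem_inf.mpr ⟨v.2, (kmem _).mpr ?_⟩, ?_⟩
        · exact congrArg Subtype.val hv.apply_eq_smul
        · intro h0
          exact hv.2 (Subtype.ext h0)
      · intro h' x hx
        obtain ⟨hxL, hxk⟩ := Submodule.mem_inf.mp hx
        refine Submodule.mem_inf.mpr ⟨hLS.2 h' x hxL, (kmem _).mpr ?_⟩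
        have hker := (kmem x).mp hxk
        have hcom : (h : G) * (h' : G) = (h' : G) * (h : G) := by
          exact_mod_cast congrArg (Subtype.val) (hcomm h h')
        calc W.ρ (h : G) (W.ρ (h' : G) x) = W.ρ ((h : G) * (h' : G)) x := by
              rw [map_mul]; rfl
        _ = W.ρ ((h' : G) * (h : G)) x := by rw [hcom]
        _ = W.ρ (h' : G) (W.ρ (h : G) x) := by rw [map_mul]; rfl
        _ = W.ρ (h' : G) (c • x) := by rw [hker]
        _ = c • W.ρ (h' : G) x := by rw [map_smul]
    have hEL : E = L := Submodule.eq_of_le_of_finrank_le inf_le_left (hminL E hES)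
    intro x hx
    exact (kmem x).mp (Submodule.mem_inf.mp (hEL.symm ▸ hx : x ∈ E)).2
  obtain ⟨v, hvL, hv0⟩ := Submodule.exists_mem_ne_zero_of_ne_bot hLS.1
  set U : Submodule ℂ W.V :=
    Submodule.span ℂ (Set.range (fun q : G ⧸ H => W.ρ q.out v)) with hU
  have hgen : ∀ g : G, W.ρ g v ∈ U := by
    intro g
    obtain ⟨a, ha⟩ := QuotientGroup.mk_out_eq_mul H g
    obtain ⟨c, hc⟩ := hscal a
    have hout : (QuotientGroup.mk g : G ⧸ H).out * (a : G)⁻¹ = g := by rw [ha]; group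
    have h1 : W.ρ g v = W.ρ ((QuotientGroup.mk g : G ⧸ H).out * (a : G)⁻¹) v := by rw [hout]
    have h2 : W.ρ ((QuotientGroup.mk g : G ⧸ H).out * (a : G)⁻¹) v
        = W.ρ ((QuotientGroup.mk g : G ⧸ H).out) (W.ρ ((a : G)⁻¹) v) := by
      rw [map_mul]; rfl
    obtain ⟨c', hc'⟩ := hscal a⁻¹
    have h3 : W.ρ ((a : G)⁻¹) v = c' • v := by
      have := hc' v hvL
      simpa using this
    rw [h1, h2, h3, map_smul]
    exact Submodule.smul_mem _ _ (Submodule.subset_span ⟨QuotientGroup.mk g, rfl⟩)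
  have hUinv : ∀ (g : G) x, x ∈ U → W.ρ g x ∈ U := by
    intro g x hx
    have hmap : U.map (W.ρ g) ≤ U := by
      rw [hU, Submodule.map_span]
      apply Submodule.span_le.mpr
      rintro _ ⟨_, ⟨q, rfl⟩, rfl⟩
      show W.ρ g (W.ρ q.out v) ∈ U
      have heq : W.ρ g (W.ρ q.out v) = W.ρ (g * q.out) v := by rw [map_mul]; rfl
      rw [heq]
      exact hgen _
    exact hmap ⟨x, hx, rfl⟩
  have hUne : U ≠ ⊥ := by
    rw [Submodule.ne_bot_iff]
    set z := (QuotientGroup.mk (1 : G) : G ⧸ H).out with hz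
    refine ⟨W.ρ z v, Submodule.subset_span ⟨QuotientGroup.mk (1 : G), rfl⟩, ?_⟩
    intro h0
    apply hv0
    have h5 : W.ρ z⁻¹ (W.ρ z v) = 0 := by rw [h0, map_zero]
    have h6 : W.ρ z⁻¹ (W.ρ z v) = W.ρ (z⁻¹ * z) v := by rw [map_mul]; rfl
    rw [h6, inv_mul_cancel, map_one] at h5
    simpa using h5
  have hUtop : U = ⊤ := invariant_eq_top W hW U hUinv hUne
  have hfin : Module.finrank ℂ W = Module.finrank ℂ U := by
    rw [hUtop, finrank_top]
  rw [hfin, hU]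
  have hle : Module.finrank ℂ (Submodule.span ℂ (Set.range (fun q : G ⧸ H => W.ρ q.out v)))
      ≤ (Set.range (fun q : G ⧸ H => W.ρ q.out v)).toFinset.card :=
    finrank_span_le_card _
  refine le_trans hle ?_
  have : (Set.range (fun q : G ⧸ H => W.ρ q.out v)).toFinset.card ≤ Fintype.card (G ⧸ H) := by
    rw [Set.toFinset_range]
    exact Finset.card_image_le.trans (by simp)
  refine le_trans this ?_
  rw [Subgroup.index, Nat.card_eq_fintype_card]

end Aux

/-- In a normally monomial finite `p`-group, a faithful irreducible character has the maximal
degree `b(G)` and is induced from a linear character of a normal abelian subgroup of index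
`χ(1)`. -/
theorem normally_monomial_faithful_max_degree (p : ℕ) (hp : p.Prime) (G : Type) [Group G]
    [Fintype G] (hpG : IsPGroup p G) (hnm : NormallyMonomial G) (V : FDRep ℂ G) (hV : Simple V)
    (hfaith : repKer V = ⊥) :
    repDegree V = sSup (cdSet G) ∧
      ∃ (H : Subgroup G) (lam : H →* ℂˣ), H.Normal ∧ (∀ a b : H, a * b = b * a) ∧
        H.index = repDegree V ∧ FDRep.character V = indLinearChar H lam := by
  obtain ⟨H, lam, hHn, hchar⟩ := hnm V hV
  have hind : H.index = repDegree V := ind_index V H lam hchar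
  -- the normal subgroup is abelian
  have habel : ∀ a b : H, a * b = b * a := by
    intro a b
    set g : G := (a : G) * b * (a : G)⁻¹ * (b : G)⁻¹ with hg
    have hside : ∀ x : G, ∃ hx : x * g * x⁻¹ ∈ H, lam ⟨x * g * x⁻¹, hx⟩ = 1 := by
      intro x
      have hA : x * (a : G) * x⁻¹ ∈ H := hHn.conj_mem _ a.2 x
      have hB : x * (b : G) * x⁻¹ ∈ H := hHn.conj_mem _ b.2 x
      have e1 : x * g * x⁻¹ =
          (x * (a : G) * x⁻¹) * (x * (b : G) * x⁻¹) * (x * (a : G) * x⁻¹)⁻¹ *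
            (x * (b : G) * x⁻¹)⁻¹ := by rw [hg]; group
      have hmem : x * g * x⁻¹ ∈ H := by
        rw [e1]
        exact mul_mem (mul_mem (mul_mem hA hB) (inv_mem hA)) (inv_mem hB)
      refine ⟨hmem, ?_⟩
      have e2 : (⟨x * g * x⁻¹, hmem⟩ : H) =
          ⟨_, hA⟩ * ⟨_, hB⟩ * (⟨_, hA⟩ : H)⁻¹ * (⟨_, hB⟩ : H)⁻¹ := by
        apply Subtype.ext
        push_cast
        exact e1
      rw [e2, map_mul, map_mul, map_mul, map_inv, map_inv]
      exact commutatorElement_eq_one_iff_mul_comm.mpr (mul_comm _ _)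
    have h1 := congrFun hchar 1
    rw [FDRep.char_one, indLinearChar_value H lam 1 (by
      intro x
      have hx1 : x * 1 * x⁻¹ = 1 := by group
      have hmem : x * 1 * x⁻¹ ∈ H := by rw [hx1]; exact H.one_mem
      refine ⟨hmem, ?_⟩
      have : (⟨x * 1 * x⁻¹, hmem⟩ : H) = 1 := Subtype.ext hx1
      rw [this, map_one])] at h1
    have hvg : FDRep.character V g = (Module.finrank ℂ V : ℂ) := by
      rw [hchar, indLinearChar_value H lam g hside, ← h1]
    have hrho := rho_eq_one_of_char V g hvg
    have hker : g ∈ repKer V := by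
      show g ∈ MonoidHom.ker (Representation.asGroupHom V.ρ)
      rw [MonoidHom.mem_ker]
      apply Units.ext
      rw [Representation.asGroupHom_apply]
      exact hrho
    rw [hfaith] at hker
    have hg1 : g = 1 := hker
    have : (a : G) * b = b * a := commutatorElement_eq_one_iff_mul_comm.mp hg1
    exact Subtype.ext this
  have hmemcd : repDegree V ∈ cdSet G := ⟨V, hV, rfl⟩
  have hub : ∀ m ∈ cdSet G, m ≤ repDegree V := by
    rintro m ⟨W, hWs, rfl⟩
    calc repDegree W = Module.finrank ℂ W := rfl
    _ ≤ H.index := finrank_le_index W hWs H habel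
    _ = repDegree V := hind
  refine ⟨le_antisymm (le_csSup ⟨repDegree V, fun m hm => hub m hm⟩ hmemcd)
    (csSup_le ⟨_, hmemcd⟩ hub), H, lam, hHn, habel, hind, hchar⟩
end
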